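/- arXiv:2203.16709 — 5 statements merged into one kernel-verified Lean document; each statement's English description precedes it below -/
import Mathlib

section
/- Let D > 1 be a squarefree integer with D ≡ 1 or 2 (mod 4) such that every element of the ideal class group of ℚ(√−D) has order dividing 2. Let p be an odd prime with Legendre symbol (−D/p) = 1. Then the equation x² + Dy² = z² has exactly one normalized solution of the form (a, b, p): there exists exactly one pair of positive integers (a, b) with a² + Db² = p² and gcd(a, b, p) = 1. -/
private lemma int_sq_eq {b d : ℤ} (hb : 0 < b) (hd : 0 < d) (h : d^2 = b^2) : d = b := by
  have h' : (d - b) * (d + b) = 0 := by linear_combination h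
  rcases mul_eq_zero.mp h' with h | h
  · linarith
  · linarith

private lemma int_l_eq_one {p l Y : ℤ} (hp : 0 < p) (hY : Y = p^2*l) (h1 : 0 < Y)
    (h2 : Y < 2*p^2) : l = 1 := by
  have hp2 : 0 < p^2 := by positivity
  have hl0 : 0 < l := by by_contra hcon; push_neg at hcon; nlinarith
  have hl2 : l < 2 := by by_contra hcon; push_neg at hcon; nlinarith
  omega

private lemma int_no_sol {x p D : ℤ} (hD : 1 < D) (hp : 0 < p)
    (h : x^2 + D*((p^2)*(p^2)) = p^2*p^2) : False := by
  have hp2 : 0 < p^2 := by positivity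
  nlinarith [sq_nonneg x]

set_option maxHeartbeats 1000000 in
lemma aux_unique {D p : ℕ} (hD : 1 < D) (hp : p.Prime) (hpodd : p ≠ 2)
    {a b c d : ℕ} (ha : 0 < a) (hb : 0 < b) (hc : 0 < c) (hd : 0 < d)
    (h1 : a^2 + D*b^2 = p^2) (h2 : c^2 + D*d^2 = p^2) : a = c ∧ b = d := by
  have hpP : Prime (p : ℤ) := Nat.prime_iff_prime_int.mp hp
  have hp2 : 2 < p := lt_of_le_of_ne hp.two_le (Ne.symm hpodd)
  have H1 : (a:ℤ)^2 + (D:ℤ)*(b:ℤ)^2 = (p:ℤ)^2 := by exact_mod_cast h1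
  have H2 : (c:ℤ)^2 + (D:ℤ)*(d:ℤ)^2 = (p:ℤ)^2 := by exact_mod_cast h2
  have hDz : (1:ℤ) < D := by exact_mod_cast hD
  have haz : (0:ℤ) < a := by exact_mod_cast ha
  have hbz : (0:ℤ) < b := by exact_mod_cast hb
  have hcz : (0:ℤ) < c := by exact_mod_cast hc
  have hdz : (0:ℤ) < d := by exact_mod_cast hd
  have hpz : (0:ℤ) < p := by positivity
  have hap : (a:ℤ) < p := by nlinarith
  have hbp : (b:ℤ) < p := by nlinarith
  have hcp : (c:ℤ) < p := by nlinarith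
  have hdp : (d:ℤ) < p := by nlinarith
  have hadp : (a:ℤ)*d < (p:ℤ)^2 := by
    rw [sq]; exact mul_lt_mul'' hap hdp haz.le hdz.le
  have hbcp : (b:ℤ)*c < (p:ℤ)^2 := by
    rw [sq]; exact mul_lt_mul'' hbp hcp hbz.le hcz.le
  have had0 : (0:ℤ) < (a:ℤ)*d := mul_pos haz hdz
  have hbc0 : (0:ℤ) < (b:ℤ)*c := mul_pos hbz hcz
  set X : ℤ := a*d - b*c with hX
  set Y : ℤ := a*d + b*c with hY
  have key : X * Y = (p:ℤ)^2 * (d^2 - b^2) := by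
    rw [hX, hY]; linear_combination (d:ℤ)^2 * H1 - (b:ℤ)^2 * H2
  have hdvd : (p:ℤ)^2 ∣ X * Y := ⟨_, key⟩
  have hnotboth : ¬ ((p:ℤ) ∣ X ∧ (p:ℤ) ∣ Y) := by
    rintro ⟨hX1, hY1⟩
    have h2ad : (p:ℤ) ∣ 2*(a*d) := by
      have h5 : (2:ℤ)*(a*d) = Y + X := by rw [hX, hY]; ring
      rw [h5]; exact dvd_add hY1 hX1
    have hnp2 : ¬ (p:ℤ) ∣ 2 := by
      intro h; have := Int.le_of_dvd (by norm_num) h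
      have : (p:ℕ) ≤ 2 := by exact_mod_cast this
      omega
    have had : (p:ℤ) ∣ (a:ℤ)*d := ((hpP.dvd_mul).mp h2ad).resolve_left hnp2
    rcases hpP.dvd_mul.mp had with h | h
    · have := Int.le_of_dvd haz h; omega
    · have := Int.le_of_dvd hdz h; omega
  have hpXY : (p:ℤ) ∣ X * Y := dvd_trans (dvd_pow_self _ (by norm_num)) hdvd
  rcases hpP.dvd_mul.mp hpXY with hpX | hpY
  · have hpY : ¬ (p:ℤ) ∣ Y := fun h => hnotboth ⟨hpX, h⟩
    obtain ⟨k, hk⟩ := hpX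
    have hpk : (p:ℤ) ∣ k := by
      have h6 : (p:ℤ) ∣ k * Y := by
        have h4 : (p:ℤ)*(p:ℤ) ∣ (p:ℤ)*(k*Y) := by
          rw [show (p:ℤ)*(k*Y) = X*Y by rw [hk]; ring]
          simpa [sq] using hdvd
        exact (mul_dvd_mul_iff_left (by positivity : (p:ℤ) ≠ 0)).mp h4
      exact (hpP.dvd_mul.mp h6).resolve_right hpY
    have hX0 : X = 0 := by
      rcases eq_or_ne X 0 with h | h
      · exact h
      · exfalso
        obtain ⟨l, hl⟩ := hpk
        have h7 : (p:ℤ)^2 ∣ X := ⟨l, by rw [hk, hl]; ring⟩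
        have habs := Int.le_of_dvd (abs_pos.mpr h) ((dvd_abs _ _).mpr h7)
        have hXlt : X < (p:ℤ)^2 := by rw [hX]; linarith
        have hXgt : -((p:ℤ)^2) < X := by rw [hX]; linarith
        have : |X| < (p:ℤ)^2 := abs_lt.mpr ⟨hXgt, hXlt⟩
        linarith
    have hbd : b = d := by
      have h8 : (p:ℤ)^2 * (d^2 - b^2) = 0 := by rw [← key, hX0, zero_mul]
      have h9 : (d:ℤ)^2 = (b:ℤ)^2 := by
        rcases mul_eq_zero.mp h8 with h | h
        · exact absurd h (by positivity)
        · linarith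
      have := int_sq_eq hbz hdz h9
      exact_mod_cast this.symm
    have hac : a = c := by
      subst hbd
      have h10 : (c:ℤ)^2 = (a:ℤ)^2 := by linarith
      have := int_sq_eq haz hcz h10
      exact_mod_cast this.symm
    exact ⟨hac, hbd⟩
  · exfalso
    have hpX : ¬ (p:ℤ) ∣ X := fun h => hnotboth ⟨h, hpY⟩
    obtain ⟨k, hk⟩ := hpY
    have hpk : (p:ℤ) ∣ k := by
      have h6 : (p:ℤ) ∣ k * X := by
        have h4 : (p:ℤ)*(p:ℤ) ∣ (p:ℤ)*(k*X) := by
          rw [show (p:ℤ)*(k*X) = X*Y by rw [hk]; ring]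
          simpa [sq] using hdvd
        exact (mul_dvd_mul_iff_left (by positivity : (p:ℤ) ≠ 0)).mp h4
      exact (hpP.dvd_mul.mp h6).resolve_right hpX
    obtain ⟨l, hl⟩ := hpk
    have hYp2 : Y = (p:ℤ)^2 * l := by rw [hk, hl]; ring
    have hY1 : 0 < Y := by rw [hY]; positivity
    have hY2 : Y < 2*(p:ℤ)^2 := by rw [hY]; linarith
    have hl1 : l = 1 := int_l_eq_one hpz hYp2 hY1 hY2
    have hiden : ((a:ℤ)*c - D*b*d)^2 + (D:ℤ)*(Y*Y) = (p:ℤ)^2*(p:ℤ)^2 := by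
      rw [hY]; linear_combination ((c:ℤ)^2 + (D:ℤ)*(d:ℤ)^2) * H1 + (p:ℤ)^2 * H2
    rw [hYp2, hl1, mul_one] at hiden
    exact int_no_sol hDz hpz hiden


open Ideal FractionalIdeal
open scoped nonZeroDivisors

set_option maxHeartbeats 1600000 in
lemma aux_exists (D : ℕ) (hD : 1 < D) (hsf : Squarefree D)
    [IsDomain (ℤ√(-(D : ℤ)))]
    (hclass : ∀ x : ClassGroup (ℤ√(-(D : ℤ))), x ^ 2 = 1)
    (p : ℕ) (hp : p.Prime) (hpodd : p ≠ 2)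
    (hleg : @legendreSym p ⟨hp⟩ (-(D : ℤ)) = 1) :
    ∃ a b : ℕ, 0 < a ∧ 0 < b ∧ a ^ 2 + D * b ^ 2 = p ^ 2 := by
  haveI : Fact p.Prime := ⟨hp⟩
  have hp2 : 2 < p := lt_of_le_of_ne hp.two_le (Ne.symm hpodd)
  have hD0 : ((-(D:ℤ) : ℤ) : ZMod p) ≠ 0 := by
    intro h0
    rw [← legendreSym.eq_zero_iff p _] at h0
    rw [hleg] at h0; norm_num at h0
  obtain ⟨y, hy⟩ : IsSquare ((-(D:ℤ) : ℤ) : ZMod p) :=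
    (legendreSym.eq_one_iff p hD0).mp hleg
  set t : ℤ := (y.val : ℤ) with ht
  have hyt : ((t : ℤ) : ZMod p) = y := by
    rw [ht]; push_cast; rw [ZMod.natCast_val, ZMod.cast_id]
  have hdvdtD : (p:ℤ) ∣ t^2 + D := by
    have h5 : ((t^2 + D : ℤ) : ZMod p) = 0 := by
      push_cast
      rw [hyt]
      have h6 : ((-(D:ℤ) : ℤ) : ZMod p) = y * y := hy
      push_cast at h6
      linear_combination -h6 - sq y + y*y
    exact (ZMod.intCast_zmod_eq_zero_iff_dvd _ p).mp h5
  obtain ⟨m, hm⟩ := hdvdtD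
  have hpt : ¬ (p:ℤ) ∣ t := by
    intro h
    have h7 : ((t : ℤ) : ZMod p) = 0 := (ZMod.intCast_zmod_eq_zero_iff_dvd _ p).mpr h
    rw [hyt] at h7
    rw [h7, mul_zero] at hy
    exact hD0 hy
  have hcop : IsCoprime ((p:ℤ)) (2*t) := by
    have hpP : Prime (p : ℤ) := Nat.prime_iff_prime_int.mp hp
    rw [Prime.coprime_iff_not_dvd hpP]
    intro h
    rcases hpP.dvd_mul.mp h with h | h
    · have h8 := Int.le_of_dvd (by norm_num) h
      have : (p:ℕ) ≤ 2 := by exact_mod_cast h8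
      omega
    · exact hpt h
  obtain ⟨x, z, hxz⟩ := hcop
  -- the ring and the ideals
  set pR : ℤ√(-(D : ℤ)) := ((p:ℤ) : ℤ√(-(D : ℤ))) with hpRdef
  set π : ℤ√(-(D : ℤ)) := ⟨t, 1⟩ with hπdef
  set π' : ℤ√(-(D : ℤ)) := ⟨t, -1⟩ with hπ'def
  set P : Ideal (ℤ√(-(D : ℤ))) := Ideal.span {pR, π} with hP
  set Q : Ideal (ℤ√(-(D : ℤ))) := Ideal.span {pR, π'} with hQ
  have hππ : π * π' = pR * ((m : ℤ) : ℤ√(-(D : ℤ))) := by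
    rw [hπdef, hπ'def, hpRdef]
    ext <;> simp [Zsqrtd.re_mul, Zsqrtd.im_mul, Zsqrtd.re_intCast, Zsqrtd.im_intCast] <;>
      linear_combination hm
  have hsum : π + π' = ((2*t : ℤ) : ℤ√(-(D : ℤ))) := by
    rw [hπdef, hπ'def]; ext <;> simp <;> ring
  have hone : ((x : ℤ) : ℤ√(-(D : ℤ)))*pR + ((z : ℤ) : ℤ√(-(D : ℤ)))*((2*t : ℤ) : ℤ√(-(D : ℤ))) = 1 := by
    have h10 : ((x*(p:ℤ) + z*(2*t) : ℤ) : ℤ√(-(D : ℤ))) = ((1 : ℤ) : ℤ√(-(D : ℤ))) := by rw [hxz]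
    rw [Int.cast_add, Int.cast_mul, Int.cast_mul, Int.cast_one] at h10
    rw [hpRdef]; exact h10
  have hPQ : P * Q = Ideal.span {pR} := by
    apply le_antisymm
    · apply Ideal.mul_le.mpr
      intro r hr s hs
      rw [hP, Ideal.mem_span_pair] at hr
      rw [hQ, Ideal.mem_span_pair] at hs
      obtain ⟨u, v, rfl⟩ := hr
      obtain ⟨u', v', rfl⟩ := hs
      rw [Ideal.mem_span_singleton]
      exact ⟨u*u'*pR + u*v'*π' + v*u'*π + v*v'*((m : ℤ) : ℤ√(-(D : ℤ))),
        by linear_combination (v*v') * hππ⟩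
    · rw [Ideal.span_singleton_le_iff_mem]
      have h1 : pR * pR ∈ P*Q :=
        Ideal.mul_mem_mul (Ideal.subset_span (by simp)) (Ideal.subset_span (by simp))
      have h2 : π * pR ∈ P*Q :=
        Ideal.mul_mem_mul (Ideal.subset_span (by simp)) (Ideal.subset_span (by simp))
      have h3 : pR * π' ∈ P*Q :=
        Ideal.mul_mem_mul (Ideal.subset_span (by simp)) (Ideal.subset_span (by simp))
      have h11 : pR = ((x : ℤ) : ℤ√(-(D : ℤ)))*(pR*pR) + ((z : ℤ) : ℤ√(-(D : ℤ)))*(π*pR + pR*π') := by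
        linear_combination (-pR)*hone + (-(pR*((z : ℤ) : ℤ√(-(D : ℤ)))))*hsum
      rw [h11]
      exact add_mem (Ideal.mul_mem_left _ _ h1)
        (Ideal.mul_mem_left _ _ (add_mem h2 h3))
  -- fractional ideal unit
  have hpR0 : pR ≠ 0 := by
    rw [hpRdef]
    intro h
    have h12 := congrArg Zsqrtd.re h
    simp [Zsqrtd.re_intCast] at h12
    omega
  have hpK : algebraMap (ℤ√(-(D : ℤ))) (FractionRing (ℤ√(-(D : ℤ)))) pR ≠ 0 := by
    rw [Ne, IsFractionRing.to_map_eq_zero_iff]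
    exact hpR0
  have hPQcoe : (↑P : FractionalIdeal (ℤ√(-(D : ℤ)))⁰ (FractionRing (ℤ√(-(D : ℤ))))) * (↑Q : FractionalIdeal (ℤ√(-(D : ℤ)))⁰ (FractionRing (ℤ√(-(D : ℤ)))))
      = spanSingleton _ (algebraMap _ _ pR) := by
    rw [← coeIdeal_mul, hPQ, coeIdeal_span_singleton]
  have hUone : (↑P : FractionalIdeal (ℤ√(-(D : ℤ)))⁰ (FractionRing (ℤ√(-(D : ℤ)))))
      * (spanSingleton _ ((algebraMap (ℤ√(-(D : ℤ))) (FractionRing (ℤ√(-(D : ℤ)))) pR))⁻¹ * (↑Q : FractionalIdeal (ℤ√(-(D : ℤ)))⁰ (FractionRing (ℤ√(-(D : ℤ))))))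
      = 1 := by
    rw [mul_left_comm, hPQcoe, spanSingleton_mul_spanSingleton, inv_mul_cancel₀ hpK,
      spanSingleton_one]
  set U : (FractionalIdeal (ℤ√(-(D : ℤ)))⁰ (FractionRing (ℤ√(-(D : ℤ)))))ˣ :=
    Units.mkOfMulEqOne _ _ hUone with hUdef
  have hUval : (U : FractionalIdeal (ℤ√(-(D : ℤ)))⁰ (FractionRing (ℤ√(-(D : ℤ))))) = ↑P := rfl
  have hsq := hclass (ClassGroup.mk (FractionRing (ℤ√(-(D : ℤ)))) U)
  rw [← map_pow] at hsq
  have hU2 : ((U^2 : (FractionalIdeal (ℤ√(-(D : ℤ)))⁰ (FractionRing (ℤ√(-(D : ℤ)))))ˣ) :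
      FractionalIdeal (ℤ√(-(D : ℤ)))⁰ (FractionRing (ℤ√(-(D : ℤ))))) = ↑(P^2) := by
    rw [Units.val_pow_eq_pow_val, hUval, coeIdeal_pow]
  obtain ⟨α, hα0, hα⟩ := (ClassGroup.mk_eq_one_of_coe_ideal hU2).mp hsq
  -- conjugation
  have hstarP : starRingEnd (ℤ√(-(D : ℤ))) pR = pR := by
    rw [starRingEnd_apply, hpRdef]; exact star_intCast _
  have hstarπ : starRingEnd (ℤ√(-(D : ℤ))) π = π' := by
    rw [starRingEnd_apply, hπdef, hπ'def, Zsqrtd.star_mk]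
  have hQmap : Q = Ideal.map (starRingEnd (ℤ√(-(D : ℤ)))) P := by
    rw [hP, hQ, Ideal.map_span, Set.image_pair, hstarP, hstarπ]
  have hQ2 : Q^2 = Ideal.span {star α} := by
    rw [hQmap, ← Ideal.map_pow, hα, Ideal.map_span, Set.image_singleton, starRingEnd_apply]
  have hspansq : Ideal.span ({α * star α} : Set (ℤ√(-(D : ℤ)))) = Ideal.span {pR^2} := by
    calc Ideal.span {α * star α}
        = Ideal.span {α} * Ideal.span {star α} := (Ideal.span_singleton_mul_span_singleton _ _).symm
      _ = P^2 * Q^2 := by rw [← hα, ← hQ2]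
      _ = (P*Q)^2 := (mul_pow P Q 2).symm
      _ = Ideal.span {pR}^2 := by rw [hPQ]
      _ = Ideal.span {pR^2} := Ideal.span_singleton_pow pR 2
  obtain ⟨u, hu⟩ := Ideal.span_singleton_eq_span_singleton.mp hspansq
  have hDle : (-(D:ℤ)) ≤ 0 := neg_nonpos.mpr (by positivity)
  have hnormu : Zsqrtd.norm ((u : ℤ√(-(D : ℤ)))) = 1 :=
    (Zsqrtd.norm_eq_one_iff' hDle _).mpr u.isUnit
  have hnormα : Zsqrtd.norm α = (p:ℤ)^2 := by
    have h1 := congrArg Zsqrtd.norm hu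
    rw [Zsqrtd.norm_mul, Zsqrtd.norm_mul, Zsqrtd.norm_conj, hnormu, mul_one] at h1
    have h2 : Zsqrtd.norm (pR^2) = ((p:ℤ)*(p:ℤ))*((p:ℤ)*(p:ℤ)) := by
      rw [hpRdef, sq, Zsqrtd.norm_mul, Zsqrtd.norm_intCast]
    rw [h2] at h1
    have h3 : 0 ≤ Zsqrtd.norm α := Zsqrtd.norm_nonneg hDle α
    have h4 : Zsqrtd.norm α * Zsqrtd.norm α = ((p:ℤ)^2)*((p:ℤ)^2) := by linear_combination h1
    rcases mul_self_eq_mul_self_iff.mp h4 with h5 | h5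
    · exact h5
    · have : (0:ℤ) < (p:ℤ)^2 := by positivity
      linarith
  have hre : α.re^2 + (D:ℤ) * α.im^2 = (p:ℤ)^2 := by
    rw [Zsqrtd.norm_def] at hnormα; linear_combination hnormα
  -- α.im ≠ 0
  have him : α.im ≠ 0 := by
    intro h0
    have hre2 : α.re^2 = (p:ℤ)^2 := by
      rw [h0] at hre; simpa using hre
    have hαcast : α = ((α.re : ℤ) : ℤ√(-(D : ℤ))) := by
      ext <;> simp [h0, Zsqrtd.re_intCast, Zsqrtd.im_intCast]
    have hαspan : Ideal.span {α} = Ideal.span {pR} := by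
      have hfact : (α.re - (p:ℤ))*(α.re + (p:ℤ)) = 0 := by linear_combination hre2
      rcases mul_eq_zero.mp hfact with h | h
      · rw [hαcast, show α.re = ((p:ℕ):ℤ) from by linarith, hpRdef]
      · rw [hαcast, show α.re = -((p:ℕ):ℤ) from by linarith, Int.cast_neg, hpRdef]
        exact Ideal.span_singleton_neg _
    have hPQ2 : P^2 = P*Q := by rw [hα, hαspan, ← hPQ]
    have hcoe' : ((↑P : FractionalIdeal (ℤ√(-(D : ℤ)))⁰ (FractionRing (ℤ√(-(D : ℤ))))))^2
        = (↑P : FractionalIdeal (ℤ√(-(D : ℤ)))⁰ (FractionRing (ℤ√(-(D : ℤ))))) * (↑Q : FractionalIdeal (ℤ√(-(D : ℤ)))⁰ (FractionRing (ℤ√(-(D : ℤ))))) := by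
      rw [← coeIdeal_pow, hPQ2, coeIdeal_mul]
    have h3 : (↑P : FractionalIdeal (ℤ√(-(D : ℤ)))⁰ (FractionRing (ℤ√(-(D : ℤ))))) = (↑Q : FractionalIdeal (ℤ√(-(D : ℤ)))⁰ (FractionRing (ℤ√(-(D : ℤ))))) := by
      calc (↑P : FractionalIdeal (ℤ√(-(D : ℤ)))⁰ (FractionRing (ℤ√(-(D : ℤ)))))
          = ((↑U⁻¹ : FractionalIdeal (ℤ√(-(D : ℤ)))⁰ (FractionRing (ℤ√(-(D : ℤ))))) * ↑U) * (↑P : FractionalIdeal (ℤ√(-(D : ℤ)))⁰ (FractionRing (ℤ√(-(D : ℤ))))) := by rw [U.inv_mul, one_mul]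
        _ = (↑U⁻¹ : FractionalIdeal (ℤ√(-(D : ℤ)))⁰ (FractionRing (ℤ√(-(D : ℤ))))) * ((↑P : FractionalIdeal (ℤ√(-(D : ℤ)))⁰ (FractionRing (ℤ√(-(D : ℤ))))) * (↑P : FractionalIdeal (ℤ√(-(D : ℤ)))⁰ (FractionRing (ℤ√(-(D : ℤ)))))) := by rw [mul_assoc, hUval]
        _ = (↑U⁻¹ : FractionalIdeal (ℤ√(-(D : ℤ)))⁰ (FractionRing (ℤ√(-(D : ℤ))))) * ((↑P : FractionalIdeal (ℤ√(-(D : ℤ)))⁰ (FractionRing (ℤ√(-(D : ℤ))))) * (↑Q : FractionalIdeal (ℤ√(-(D : ℤ)))⁰ (FractionRing (ℤ√(-(D : ℤ)))))) := by rw [← sq, hcoe']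
        _ = ((↑U⁻¹ : FractionalIdeal (ℤ√(-(D : ℤ)))⁰ (FractionRing (ℤ√(-(D : ℤ))))) * ↑U) * (↑Q : FractionalIdeal (ℤ√(-(D : ℤ)))⁰ (FractionRing (ℤ√(-(D : ℤ))))) := by rw [hUval, mul_assoc]
        _ = (↑Q : FractionalIdeal (ℤ√(-(D : ℤ)))⁰ (FractionRing (ℤ√(-(D : ℤ))))) := by rw [U.inv_mul, one_mul]
    have hQP : Q = P := (coeIdeal_inj.mp h3).symm
    have hmemπ : π ∈ P := Ideal.subset_span (by simp)
    have hmemπ' : π' ∈ P := by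
      rw [← hQP]; exact Ideal.subset_span (by simp)
    have hmempR : pR ∈ P := Ideal.subset_span (by simp)
    have h1P : (1 : ℤ√(-(D : ℤ))) ∈ P := by
      have h2t : ((2*t : ℤ) : ℤ√(-(D : ℤ))) ∈ P := by
        rw [← hsum]; exact add_mem hmemπ hmemπ'
      rw [← hone]
      exact add_mem (Ideal.mul_mem_left _ _ hmempR) (Ideal.mul_mem_left _ _ h2t)
    have hPtop : P = ⊤ := (Ideal.eq_top_iff_one P).mpr h1P
    have hunit : IsUnit pR := by
      rw [← Ideal.span_singleton_eq_top, ← hPQ, hQP, hPtop, Ideal.mul_top]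
    have h13 := Zsqrtd.norm_eq_one_iff.mpr hunit
    rw [hpRdef, Zsqrtd.norm_intCast] at h13
    have h14 : ((p:ℤ)*(p:ℤ)).natAbs = p * p := by
      rw [Int.natAbs_mul]; simp
    rw [h14] at h13
    nlinarith
  -- α.re ≠ 0
  have hreo : α.re ≠ 0 := by
    intro h0
    rw [h0] at hre
    have hD2 : (D:ℤ) * α.im^2 = (p:ℤ)^2 := by linear_combination hre
    have hD2' : D * α.im.natAbs^2 = p^2 := by
      have h15 : ((D * α.im.natAbs^2 : ℕ) : ℤ) = ((p^2 : ℕ) : ℤ) := by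
        push_cast [sq_abs]
        linarith
      exact_mod_cast h15
    have hb0 : α.im.natAbs ≠ 0 := by
      intro h16
      rw [h16] at hD2'
      have : 0 < p^2 := by positivity
      simp at hD2'
      omega
    have hbdvd : α.im.natAbs ∣ p :=
      (Nat.pow_dvd_pow_iff two_ne_zero).mp ⟨D, by rw [← hD2']; ring⟩
    rcases (Nat.dvd_prime hp).mp hbdvd with h | h
    · rw [h] at hD2'
      simp at hD2'
      have hdd : p*p ∣ D := ⟨1, by rw [hD2']; ring⟩
      have := hsf p hdd
      rw [Nat.isUnit_iff] at this
      omega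
    · rw [h] at hD2'
      have hp2pos : 0 < p^2 := by positivity
      have hD1 : D = 1 := Nat.eq_of_mul_eq_mul_right hp2pos (hD2'.trans (one_mul _).symm)
      omega
  refine ⟨α.re.natAbs, α.im.natAbs, Nat.pos_of_ne_zero (Int.natAbs_ne_zero.mpr hreo),
    Nat.pos_of_ne_zero (Int.natAbs_ne_zero.mpr him), ?_⟩
  have h17 : ((α.re.natAbs^2 + D * α.im.natAbs^2 : ℕ) : ℤ) = ((p^2 : ℕ) : ℤ) := by
    push_cast [sq_abs]
    exact hre
  exact_mod_cast h17


set_option maxHeartbeats 800000 in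
/-- **Lemma 3.5 of [JMMM].**
Let `D > 1` be a squarefree integer with `D ≡ 1` or `2 (mod 4)` such that every element of the
ideal class group of `ℚ(√-D)` (equivalently, of `ℤ[√-D]`) has order dividing 2.  Let `p` be an
odd prime with Legendre symbol `(-D/p) = 1`.  Then `x² + D y² = z²` has exactly one normalized
solution of the form `(a, b, p)`: there is exactly one pair of positive integers `(a, b)` with
`a² + D b² = p²` and `gcd(a, b, p) = 1`. -/
theorem unique_normalized_solution_prime
    (D : ℕ) (hD : 1 < D) (hsf : Squarefree D) (hDmod : D % 4 = 1 ∨ D % 4 = 2)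
    [IsDomain (ℤ√(-(D : ℤ)))]
    (hclass : ∀ x : ClassGroup (ℤ√(-(D : ℤ))), x ^ 2 = 1)
    (p : ℕ) (hp : p.Prime) (hpodd : p ≠ 2)
    (hleg : @legendreSym p ⟨hp⟩ (-(D : ℤ)) = 1) :
    ∃! ab : ℕ × ℕ, 0 < ab.1 ∧ 0 < ab.2 ∧ ab.1 ^ 2 + D * ab.2 ^ 2 = p ^ 2 ∧
        Nat.gcd (Nat.gcd ab.1 ab.2) p = 1 := by
  obtain ⟨A, B, hA, hB, hEq⟩ := aux_exists D hD hsf hclass p hp hpodd hleg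
  have hgcd : ∀ a b : ℕ, 0 < a → 0 < b → a^2 + D*b^2 = p^2 →
      Nat.gcd (Nat.gcd a b) p = 1 := by
    intro a b ha hb h
    have hap : a < p := by nlinarith
    have hpgcd : ¬ p ∣ Nat.gcd a b := fun hdvd =>
      absurd (Nat.le_of_dvd ha (dvd_trans hdvd (Nat.gcd_dvd_left a b))) (by omega)
    exact Nat.Coprime.symm ((Nat.Prime.coprime_iff_not_dvd hp).mpr hpgcd)
  refine ⟨(A, B), ⟨hA, hB, hEq, hgcd A B hA hB hEq⟩, ?_⟩
  rintro ⟨a, b⟩ ⟨ha, hb, hEq', -⟩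
  obtain ⟨h1, h2⟩ := aux_unique hD hp hpodd ha hb hA hB hEq' hEq
  exact Prod.ext h1 h2
end

section
/- Let D > 1 be a squarefree integer with D ≡ 1 or 2 (mod 4) such that every element of the ideal class group of ℚ(√−D) has order dividing 2. Let a, b be integers with gcd(a, b) = 1 and let c > 1 be an odd integer with a² + Db² = c², and let c = p₁^{α₁} ⋯ p_k^{α_k} be the prime factorization of c into distinct primes. Then, writing z = (a + b·√D·i)/c ∈ ℂ, there exist a sign u ∈ {1, −1} and signs ε₁, …, ε_k ∈ {1, −1} such that z = u · ζ_{p₁}^{ε₁ α₁} ⋯ ζ_{p_k}^{ε_k α_k}. -/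
open Complex

lemma sq_dvd_of_prime_not_dvd {P B k : ℤ} (hP : Prime P) (h : P ^ 2 ∣ B * k)
    (hPB : P ∣ B) (hk : ¬ P ∣ k) : P ^ 2 ∣ B := by
  obtain ⟨B₁, rfl⟩ := hPB
  rw [pow_two] at h ⊢
  rw [mul_assoc] at h
  have h1 : P ∣ B₁ * k := (mul_dvd_mul_iff_left hP.ne_zero).mp h
  have h2 : P ∣ B₁ := (hP.dvd_mul.mp h1).resolve_right hk
  exact mul_dvd_mul_left P h2

lemma num_ne_zero (x0 y0 : ℕ) (hx : 0 < x0) (d : ℝ) :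
    ((x0 : ℂ) + (y0 : ℂ) * (d : ℂ) * Complex.I) ≠ 0 := by
  intro h
  have h1 := congrArg Complex.re h
  simp at h1
  exact (Nat.cast_pos.mpr hx).ne' h1

theorem aux_main (D : ℕ) (hD : 1 < D) (hsf : Squarefree D) :
    ∀ c : ℕ, ∀ a b : ℤ, Int.gcd a b = 1 → Odd c →
    a ^ 2 + (D : ℤ) * b ^ 2 = (c : ℤ) ^ 2 →
    ∀ x y : ℕ → ℕ,
    (∀ p ∈ c.primeFactors, 0 < x p ∧ 0 < y p ∧
        (x p) ^ 2 + D * (y p) ^ 2 = p ^ 2 ∧ Nat.gcd (Nat.gcd (x p) (y p)) p = 1) →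
    ∃ (u : ℂ) (ε : ℕ → ℤ), (u = 1 ∨ u = -1) ∧ (∀ p ∈ c.primeFactors, ε p = 1 ∨ ε p = -1) ∧
      (∀ p ∈ c.primeFactors, (p : ℤ) ∣ b * (x p : ℤ) - ε p * (a * (y p : ℤ))) ∧
      ((a : ℂ) + (b : ℂ) * (Real.sqrt D : ℂ) * Complex.I) / (c : ℂ) =
        u * ∏ p ∈ c.primeFactors,
          (((x p : ℂ) + (y p : ℂ) * (Real.sqrt D : ℂ) * Complex.I) / (p : ℂ))
            ^ (ε p * (c.factorization p : ℤ)) := by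
  intro c
  induction c using Nat.strong_induction_on with
  | _ c IH =>
  intro a b hab hodd heq x y hxy
  by_cases hc1 : c = 1
  · subst hc1
    have hD2 : (2:ℤ) ≤ (D:ℤ) := by exact_mod_cast hD
    norm_num at heq
    have hb2 : b ^ 2 ≤ 0 := by nlinarith [sq_nonneg a, sq_nonneg b, mul_nonneg (by linarith : (0:ℤ) ≤ (D:ℤ) - 2) (sq_nonneg b)]
    have hb0 : b = 0 := by nlinarith [sq_nonneg b]
    have ha2 : a * a = 1 := by nlinarith
    have ha : a = 1 ∨ a = -1 := Int.isUnit_iff.mp (IsUnit.of_mul_eq_one a ha2)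
    refine ⟨(a : ℂ), fun _ => 1, ?_, ?_, ?_, ?_⟩
    · rcases ha with h | h <;> simp [h]
    · simp
    · simp
    · simp [hb0]
  · -- inductive step
    have hc0 : c ≠ 0 := by rintro rfl; simp [Nat.odd_iff] at hodd
    set p := c.minFac with hpdef
    have hp : p.Prime := Nat.minFac_prime hc1
    have hpc : p ∣ c := Nat.minFac_dvd c
    have hpP : p ∈ c.primeFactors := Nat.mem_primeFactors.mpr ⟨hp, hpc, hc0⟩
    obtain ⟨hx0, hy0, hXYnat, hgcd⟩ := hxy p hpP
    -- p is odd
    have hp2 : p ≠ 2 := by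
      intro h
      exact Nat.not_even_iff_odd.mpr hodd (even_iff_two_dvd.mpr (h ▸ hpc))
    -- natural-number divisibility facts
    have hgcd_contra : p ∣ x p → p ∣ y p → False := by
      intro h1 h2
      have : p ∣ Nat.gcd (Nat.gcd (x p) (y p)) p := Nat.dvd_gcd (Nat.dvd_gcd h1 h2) dvd_rfl
      rw [hgcd] at this
      exact hp.one_lt.ne' (Nat.dvd_one.mp this)
    have hpp2 : p ∣ p ^ 2 := dvd_pow_self p (by norm_num)
    have hpD : ¬ p ∣ D := by
      intro hdvd
      have hsum : p ∣ x p ^ 2 + D * y p ^ 2 := hXYnat ▸ hpp2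
      have hDy : p ∣ D * y p ^ 2 := hdvd.mul_right _
      have h1 : p ∣ x p ^ 2 := by simpa using Nat.dvd_sub hsum hDy
      have hx : p ∣ x p := hp.dvd_of_dvd_pow h1
      have h3 : p ^ 2 ∣ D * y p ^ 2 := by
        have hxx : p ^ 2 ∣ x p ^ 2 := pow_dvd_pow_of_dvd hx 2
        have h4 : p ^ 2 ∣ x p ^ 2 + D * y p ^ 2 := hXYnat ▸ dvd_rfl
        simpa using Nat.dvd_sub h4 hxx
      obtain ⟨D₁, hD₁⟩ := hdvd
      have hpD₁ : ¬ p ∣ D₁ := by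
        intro hh
        obtain ⟨k, hk⟩ := hh
        have : p * p ∣ D := ⟨k, by rw [hD₁, hk]; ring⟩
        exact hp.one_lt.ne' (Nat.isUnit_iff.mp (hsf p this))
      have h5 : p ∣ D₁ * y p ^ 2 := by
        have := h3
        rw [hD₁, pow_two, mul_assoc] at this
        exact (mul_dvd_mul_iff_left hp.pos.ne').mp this
      have hy : p ∣ y p := hp.dvd_of_dvd_pow ((hp.dvd_mul.mp h5).resolve_left hpD₁)
      exact hgcd_contra hx hy
    have hpx : ¬ p ∣ x p := by
      intro hx
      have hsum : p ∣ x p ^ 2 + D * y p ^ 2 := hXYnat ▸ hpp2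
      have hx2 : p ∣ x p ^ 2 := dvd_pow hx (by norm_num)
      have h1 : p ∣ D * y p ^ 2 := by simpa using Nat.dvd_sub hsum hx2
      have hy : p ∣ y p := hp.dvd_of_dvd_pow ((hp.dvd_mul.mp h1).resolve_left hpD)
      exact hgcd_contra hx hy
    have hpy : ¬ p ∣ y p := by
      intro hy
      have hsum : p ∣ x p ^ 2 + D * y p ^ 2 := hXYnat ▸ hpp2
      have h1 : p ∣ D * y p ^ 2 := (dvd_pow hy (by norm_num : (2:ℕ) ≠ 0)).mul_left D
      have hx2 : p ∣ x p ^ 2 := by simpa using Nat.dvd_sub hsum h1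
      exact hgcd_contra (hp.dvd_of_dvd_pow hx2) hy
    -- integer versions
    have hPprime : Prime (p : ℤ) := Nat.prime_iff_prime_int.mp hp
    have hPne : (p : ℤ) ≠ 0 := by exact_mod_cast hp.pos.ne'
    set X : ℤ := (x p : ℤ) with hXdef
    set Y : ℤ := (y p : ℤ) with hYdef
    have hXY : X ^ 2 + (D : ℤ) * Y ^ 2 = (p : ℤ) ^ 2 := by have := hXYnat; zify at this; linarith [this]
    have hPC : (p : ℤ) ∣ (c : ℤ) := Int.natCast_dvd_natCast.mpr hpc
    have hPD : ¬ (p : ℤ) ∣ (D : ℤ) := fun h => hpD (Int.natCast_dvd_natCast.mp h)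
    have hPX : ¬ (p : ℤ) ∣ X := fun h => hpx (Int.natCast_dvd_natCast.mp h)
    have hPY : ¬ (p : ℤ) ∣ Y := fun h => hpy (Int.natCast_dvd_natCast.mp h)
    have hP2 : ¬ (p : ℤ) ∣ 2 := by
      intro h
      have : p ∣ 2 := by exact_mod_cast h
      exact hp2 ((Nat.prime_dvd_prime_iff_eq hp Nat.prime_two).mp this)
    have hco : IsCoprime a b := Int.isCoprime_iff_gcd_eq_one.mpr hab
    have hPa : ¬ (p : ℤ) ∣ a := by
      intro h
      have hDb : (p : ℤ) ∣ (D : ℤ) * b ^ 2 := by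
        have : (D : ℤ) * b ^ 2 = (c : ℤ) ^ 2 - a ^ 2 := by linarith
        rw [this]
        exact dvd_sub ((dvd_pow hPC (by norm_num))) (dvd_pow h (by norm_num))
      have hb' : (p : ℤ) ∣ b := hPprime.dvd_of_dvd_pow ((hPprime.dvd_mul.mp hDb).resolve_left hPD)
      exact hPprime.not_unit (hco.isUnit_of_dvd' h hb')
    have hPb : ¬ (p : ℤ) ∣ b := by
      intro h
      have ha2 : (p : ℤ) ∣ a ^ 2 := by
        have : a ^ 2 = (c : ℤ) ^ 2 - (D : ℤ) * b ^ 2 := by linarith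
        rw [this]
        exact dvd_sub (dvd_pow hPC (by norm_num)) ((dvd_pow h (by norm_num)).mul_left _)
      exact hPprime.not_unit (hco.isUnit_of_dvd' (hPprime.dvd_of_dvd_pow ha2) h)
    -- choice of sign ε
    obtain ⟨ε, hε1, hεB⟩ : ∃ ε : ℤ, (ε = 1 ∨ ε = -1) ∧ ((p:ℤ) ∣ b * X - ε * (a * Y)) := by
      have hprod : (b * X - a * Y) * (b * X + a * Y) = b ^ 2 * (p:ℤ) ^ 2 - (c:ℤ) ^ 2 * Y ^ 2 := by
        linear_combination b ^ 2 * hXY - Y ^ 2 * heq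
      have hdvd : (p : ℤ) ∣ (b * X - a * Y) * (b * X + a * Y) := by
        rw [hprod]
        exact dvd_sub (Dvd.intro (b ^ 2 * (p:ℤ)) (by ring))
          ((dvd_pow hPC (by norm_num)).mul_right _)
      rcases hPprime.dvd_mul.mp hdvd with h | h
      · exact ⟨1, Or.inl rfl, by simpa using h⟩
      · exact ⟨-1, Or.inr rfl, by rw [show b * X - (-1) * (a * Y) = b * X + a * Y by ring]; exact h⟩
    have hε2 : ε ^ 2 = 1 := by rcases hε1 with h | h <;> simp [h]
    set A : ℤ := a * X + ε * ((D:ℤ) * (b * Y)) with hAdef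
    set B : ℤ := b * X - ε * (a * Y) with hBdef
    have hPB : (p : ℤ) ∣ B := hεB
    have hPA : (p : ℤ) ∣ A := by
      have hkey : b * A - a * B = ε * (Y * (c:ℤ) ^ 2) := by
        rw [hAdef, hBdef]; linear_combination ε * Y * heq
      have h1 : (p : ℤ) ∣ b * A := by
        have : b * A = a * B + ε * (Y * (c:ℤ) ^ 2) := by linarith
        rw [this]
        exact dvd_add (hPB.mul_left a) (((dvd_pow hPC (by norm_num)).mul_left Y).mul_left ε)
      exact (hPprime.dvd_mul.mp h1).resolve_left hPb
    have hPnB' : ¬ (p:ℤ) ∣ (b * X + ε * (a * Y)) := by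
      intro h
      have h2 : (p:ℤ) ∣ 2 * (b * X) := by
        have : 2 * (b * X) = B + (b * X + ε * (a * Y)) := by rw [hBdef]; ring
        rw [this]; exact dvd_add hPB h
      rcases hPprime.dvd_mul.mp h2 with h | h
      · exact hP2 h
      · rcases hPprime.dvd_mul.mp h with h | h
        · exact hPb h
        · exact hPX h
    have hP2B : (p:ℤ) ^ 2 ∣ B := by
      refine sq_dvd_of_prime_not_dvd hPprime ?_ hPB hPnB'
      have hid : B * (b * X + ε * (a * Y)) = b ^ 2 * (p:ℤ) ^ 2 - (c:ℤ) ^ 2 * Y ^ 2 := by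
        rw [hBdef]; linear_combination b ^ 2 * hXY - Y ^ 2 * heq - a ^ 2 * Y ^ 2 * hε2
      rw [hid]
      exact dvd_sub (Dvd.intro (b ^ 2) (by ring)) ((pow_dvd_pow_of_dvd hPC 2).mul_right _)
    have hPnA' : ¬ (p:ℤ) ∣ (a * X - ε * ((D:ℤ) * (b * Y))) := by
      intro h
      have h2 : (p:ℤ) ∣ 2 * (a * X) := by
        have : 2 * (a * X) = A + (a * X - ε * ((D:ℤ) * (b * Y))) := by rw [hAdef]; ring
        rw [this]; exact dvd_add hPA h
      rcases hPprime.dvd_mul.mp h2 with h | h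
      · exact hP2 h
      · rcases hPprime.dvd_mul.mp h with h | h
        · exact hPa h
        · exact hPX h
    have hP2A : (p:ℤ) ^ 2 ∣ A := by
      refine sq_dvd_of_prime_not_dvd hPprime ?_ hPA hPnA'
      have hid : A * (a * X - ε * ((D:ℤ) * (b * Y)))
          = a ^ 2 * (p:ℤ) ^ 2 - (D:ℤ) * ((c:ℤ) ^ 2 * Y ^ 2) := by
        rw [hAdef]
        linear_combination a ^ 2 * hXY - (D:ℤ) * Y ^ 2 * heq - (D:ℤ) ^ 2 * b ^ 2 * Y ^ 2 * hε2
      rw [hid]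
      exact dvd_sub (Dvd.intro (a ^ 2) (by ring))
        (((pow_dvd_pow_of_dvd hPC 2).mul_right _).mul_left _)
    obtain ⟨a₁, hA2⟩ := hP2A
    obtain ⟨b₁, hB2⟩ := hP2B
    obtain ⟨c', hc'⟩ := hpc
    have hc'0 : c' ≠ 0 := by rintro rfl; simp at hc'; exact hc0 hc'
    have hCc' : (c : ℤ) = (p : ℤ) * (c' : ℤ) := by exact_mod_cast hc'
    -- the reduced solution
    have ha : a = X * a₁ - ε * ((D:ℤ) * (Y * b₁)) := by
      have key : X * A - ε * ((D:ℤ) * (Y * B)) = a * (p:ℤ) ^ 2 := by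
        rw [hAdef, hBdef]
        linear_combination a * hXY + a * (D:ℤ) * Y ^ 2 * hε2
      have h2 : (p:ℤ) ^ 2 * a = (p:ℤ) ^ 2 * (X * a₁ - ε * ((D:ℤ) * (Y * b₁))) := by
        linear_combination - key + X * hA2 - ε * (D:ℤ) * Y * hB2
      exact mul_left_cancel₀ (pow_ne_zero 2 hPne) h2
    have hb : b = X * b₁ + ε * (Y * a₁) := by
      have key : X * B + ε * (Y * A) = b * (p:ℤ) ^ 2 := by
        rw [hAdef, hBdef]
        linear_combination b * hXY + b * (D:ℤ) * Y ^ 2 * hε2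
      have h2 : (p:ℤ) ^ 2 * b = (p:ℤ) ^ 2 * (X * b₁ + ε * (Y * a₁)) := by
        linear_combination - key + X * hB2 + ε * Y * hA2
      exact mul_left_cancel₀ (pow_ne_zero 2 hPne) h2
    have hco₁ : IsCoprime a₁ b₁ := by
      obtain ⟨u0, v0, huv⟩ := hco
      exact ⟨u0 * X + v0 * (ε * Y), v0 * X - u0 * (ε * ((D:ℤ) * Y)),
        by linear_combination huv - u0 * ha - v0 * hb⟩
    have hab₁ : Int.gcd a₁ b₁ = 1 := Int.isCoprime_iff_gcd_eq_one.mp hco₁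
    have heq' : a₁ ^ 2 + (D:ℤ) * b₁ ^ 2 = (c' : ℤ) ^ 2 := by
      have hABC : A ^ 2 + (D:ℤ) * B ^ 2 = (c:ℤ) ^ 2 * (p:ℤ) ^ 2 := by
        rw [hAdef, hBdef]
        linear_combination (X ^ 2 + ε ^ 2 * (D:ℤ) * Y ^ 2) * heq + (c:ℤ) ^ 2 * hXY
          + (c:ℤ) ^ 2 * (D:ℤ) * Y ^ 2 * hε2
      have h4 : (p:ℤ) ^ 4 * (a₁ ^ 2 + (D:ℤ) * b₁ ^ 2) = (p:ℤ) ^ 4 * (c':ℤ) ^ 2 := by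
        linear_combination - (A + (p:ℤ) ^ 2 * a₁) * hA2 - (D:ℤ) * (B + (p:ℤ) ^ 2 * b₁) * hB2
          + hABC + (p:ℤ) ^ 2 * ((c:ℤ) + (p:ℤ) * (c':ℤ)) * hCc'
      exact mul_left_cancel₀ (pow_ne_zero 4 hPne) h4
    have hodd' : Odd c' := (Nat.odd_mul.mp (hc' ▸ hodd)).2
    have hc'lt : c' < c := by
      rcases Nat.lt_or_ge c' c with h | h
      · exact h
      · exfalso
        have := hp.two_le
        have : 2 * c' ≤ p * c' := Nat.mul_le_mul_right c' hp.two_le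
        omega
    have hsub : c'.primeFactors ⊆ c.primeFactors :=
      Nat.primeFactors_mono ⟨p, by rw [hc']; ring⟩ hc0
    obtain ⟨u, ε', hu, hε', hdvd', hzeq'⟩ :=
      IH c' hc'lt a₁ b₁ hab₁ hodd' heq' x y (fun q hq => hxy q (hsub hq))
    -- nonvanishing facts
    have hpC0 : ((p:ℕ) : ℂ) ≠ 0 := Nat.cast_ne_zero.mpr hp.pos.ne'
    have hc'C0 : ((c':ℕ) : ℂ) ≠ 0 := Nat.cast_ne_zero.mpr hc'0
    have hζn : ((x p : ℂ) + (y p : ℂ) * (Real.sqrt D : ℂ) * I) ≠ 0 :=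
      num_ne_zero _ _ hx0 _
    have hζne : ((x p : ℂ) + (y p : ℂ) * (Real.sqrt D : ℂ) * I) / (p : ℂ) ≠ 0 :=
      div_ne_zero hζn hpC0
    have hsD2 : ((Real.sqrt D : ℝ) : ℂ) ^ 2 = (D : ℂ) := by
      rw [← Complex.ofReal_pow, Real.sq_sqrt (by positivity : (0:ℝ) ≤ (D:ℝ))]
      simp
    have hI : I ^ 2 = -1 := Complex.I_sq
    have hcC : ((c:ℕ) : ℂ) = ((c':ℕ) : ℂ) * ((p:ℕ) : ℂ) := by
      push_cast [hc']; ring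
    -- the one-step relation
    have hzstep : ((a : ℂ) + (b : ℂ) * (Real.sqrt D : ℂ) * I) / (c : ℂ)
        = (((a₁ : ℂ) + (b₁ : ℂ) * (Real.sqrt D : ℂ) * I) / (c' : ℂ))
          * (((x p : ℂ) + (y p : ℂ) * (Real.sqrt D : ℂ) * I) / (p : ℂ)) ^ ε := by
      rcases hε1 with hE | hE
      · rw [hE, zpow_one]
        have haZ : a = X * a₁ - (D:ℤ) * (Y * b₁) := by rw [ha, hE]; ring
        have hbZ : b = X * b₁ + Y * a₁ := by rw [hb, hE]; ring
        rw [hXdef, hYdef] at haZ hbZ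
        have haC : (a : ℂ) = (x p : ℂ) * (a₁ : ℂ) - (D:ℂ) * ((y p : ℂ) * (b₁ : ℂ)) := by
          exact_mod_cast haZ
        have hbC : (b : ℂ) = (x p : ℂ) * (b₁ : ℂ) + (y p : ℂ) * (a₁ : ℂ) := by
          exact_mod_cast hbZ
        have hnum : ((a₁:ℂ) + (b₁:ℂ) * (Real.sqrt D : ℂ) * I)
            * ((x p : ℂ) + (y p : ℂ) * (Real.sqrt D : ℂ) * I)
            = (a : ℂ) + (b : ℂ) * (Real.sqrt D : ℂ) * I := by
          linear_combination (-1:ℂ) * haC - ((Real.sqrt D : ℂ) * I) * hbC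
            + ((b₁:ℂ) * (y p : ℂ) * I ^ 2) * hsD2 + ((D:ℂ) * (y p : ℂ) * (b₁:ℂ)) * hI
        rw [div_mul_div_comm, hnum, hcC]
      · rw [hE, zpow_neg, zpow_one, eq_mul_inv_iff_mul_eq₀ hζne]
        have hAZ : a * X - (D:ℤ) * (b * Y) = (p:ℤ) ^ 2 * a₁ := by
          rw [← hA2, hAdef, hE]; ring
        have hBZ : b * X + a * Y = (p:ℤ) ^ 2 * b₁ := by
          rw [← hB2, hBdef, hE]; ring
        rw [hXdef, hYdef] at hAZ hBZ
        have hAC : (a:ℂ) * (x p : ℂ) - (D:ℂ) * ((b:ℂ) * (y p : ℂ)) = ((p:ℕ):ℂ) ^ 2 * (a₁:ℂ) := by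
          exact_mod_cast hAZ
        have hBC : (b:ℂ) * (x p : ℂ) + (a:ℂ) * (y p : ℂ) = ((p:ℕ):ℂ) ^ 2 * (b₁:ℂ) := by
          exact_mod_cast hBZ
        have hnum : ((a:ℂ) + (b:ℂ) * (Real.sqrt D : ℂ) * I)
            * ((x p : ℂ) + (y p : ℂ) * (Real.sqrt D : ℂ) * I)
            = ((p:ℕ):ℂ) ^ 2 * ((a₁:ℂ) + (b₁:ℂ) * (Real.sqrt D : ℂ) * I) := by
          linear_combination hAC + ((Real.sqrt D : ℂ) * I) * hBC
            + ((b:ℂ) * (y p : ℂ) * I ^ 2) * hsD2 + ((D:ℂ) * (b:ℂ) * (y p : ℂ)) * hI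
        rw [div_mul_div_comm, hnum]
        rw [show ((c:ℕ):ℂ) * ((p:ℕ):ℂ) = ((p:ℕ):ℂ) ^ 2 * ((c':ℕ):ℂ) by rw [hcC]; ring]
        rw [mul_div_mul_left _ _ (pow_ne_zero 2 hpC0)]
    -- factorization bookkeeping
    have hfacq : ∀ q : ℕ, c.factorization q = (if q = p then 1 else 0) + c'.factorization q := by
      intro q
      rw [hc', Nat.factorization_mul hp.pos.ne' hc'0]
      simp [hp.factorization, Finsupp.single_apply, eq_comm]
    have hmem' : ∀ q ∈ c.primeFactors, q ≠ p → q ∈ c'.primeFactors := by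
      intro q hq hne
      have hqp : q.Prime := Nat.prime_of_mem_primeFactors hq
      have hqc : q ∣ c := Nat.dvd_of_mem_primeFactors hq
      have hqpc' : q ∣ p * c' := hc' ▸ hqc
      rcases (Nat.Prime.dvd_mul hqp).mp hqpc' with h | h
      · exact absurd ((Nat.prime_dvd_prime_iff_eq hqp hp).mp h) hne
      · exact Nat.mem_primeFactors.mpr ⟨hqp, h, hc'0⟩
    have hforced : p ∈ c'.primeFactors → ε' p = ε := by
      intro hp'
      have hd := hdvd' p hp'
      rcases hε' p hp' with h1 | h1 <;> rcases hε1 with h2 | h2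
      · rw [h1, h2]
      · exfalso
        apply hPb
        rw [hb, h2, show X * b₁ + (-1:ℤ) * (Y * a₁) = b₁ * X - 1 * (a₁ * Y) by ring]
        rw [h1] at hd
        exact_mod_cast hd
      · exfalso
        apply hPb
        rw [hb, h2, show X * b₁ + (1:ℤ) * (Y * a₁) = b₁ * X - (-1) * (a₁ * Y) by ring]
        rw [h1] at hd
        exact_mod_cast hd
      · rw [h1, h2]
    refine ⟨u, fun q => if q = p then ε else ε' q, hu, ?_, ?_, ?_⟩
    · intro q hq
      by_cases h : q = p
      · simpa [h] using hε1
      · simpa [h] using hε' q (hmem' q hq h)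
    · intro q hq
      by_cases h : q = p
      · simp only [h, eq_self_iff_true, if_true]
        rw [hBdef, hXdef, hYdef] at hPB
        exact hPB
      · simp only [if_neg h]
        have hq' := hmem' q hq h
        have hd := hdvd' q hq'
        have hqp : q.Prime := Nat.prime_of_mem_primeFactors hq
        have hqP : Prime (q : ℤ) := Nat.prime_iff_prime_int.mp hqp
        have hqc' : (q:ℤ) ∣ (c':ℤ) := Int.natCast_dvd_natCast.mpr (Nat.dvd_of_mem_primeFactors hq')
        have hqb₁ : ¬ (q:ℤ) ∣ b₁ := by
          intro hdb
          have hqa : (q:ℤ) ∣ a₁ := by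
            have : a₁ ^ 2 = (c':ℤ) ^ 2 - (D:ℤ) * b₁ ^ 2 := by linarith [heq']
            refine hqP.dvd_of_dvd_pow (n := 2) ?_
            rw [this]
            exact dvd_sub (dvd_pow hqc' (by norm_num)) ((dvd_pow hdb (by norm_num)).mul_left _)
          exact hqP.not_unit (hco₁.isUnit_of_dvd' hqa hdb)
        have h2 : (q:ℤ) ∣ b₁ * (a₁ * (x q : ℤ) + ε' q * ((D:ℤ) * (b₁ * (y q : ℤ)))) := by
          have hr : b₁ * (a₁ * (x q : ℤ) + ε' q * ((D:ℤ) * (b₁ * (y q : ℤ))))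
              = a₁ * (b₁ * (x q : ℤ) - ε' q * (a₁ * (y q : ℤ)))
                + ε' q * (y q : ℤ) * (a₁ ^ 2 + (D:ℤ) * b₁ ^ 2) := by ring
          rw [hr, heq']
          exact dvd_add (hd.mul_left a₁) ((dvd_pow hqc' (by norm_num)).mul_left _)
        have h3 : (q:ℤ) ∣ (a₁ * (x q : ℤ) + ε' q * ((D:ℤ) * (b₁ * (y q : ℤ)))) :=
          (hqP.dvd_mul.mp h2).resolve_left hqb₁
        have hr2 : b * (x q : ℤ) - ε' q * (a * (y q : ℤ))
            = X * (b₁ * (x q : ℤ) - ε' q * (a₁ * (y q : ℤ)))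
              + ε * (Y * (a₁ * (x q : ℤ) + ε' q * ((D:ℤ) * (b₁ * (y q : ℤ))))) := by
          rw [ha, hb]; ring
        rw [hr2]
        exact dvd_add (hd.mul_left X) ((h3.mul_left Y).mul_left ε)
    · -- complex identity
      set F : ℕ → ℂ := fun q => ((x q : ℂ) + (y q : ℂ) * (Real.sqrt D : ℂ) * I) / (q : ℂ) with hFdef
      have hFp0 : F p ≠ 0 := hζne
      have key : (∏ q ∈ c.primeFactors,
            F q ^ ((if q = p then ε else ε' q) * (c.factorization q : ℤ)))
          = (∏ q ∈ c'.primeFactors, F q ^ (ε' q * (c'.factorization q : ℤ))) * F p ^ ε := by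
        rw [← Finset.mul_prod_erase _ _ hpP]
        have e2 : (c.factorization p : ℤ) = (c'.factorization p : ℤ) + 1 := by
          rw [hfacq p, if_pos rfl]; push_cast; ring
        have e3 : F p ^ ((if p = p then ε else ε' p) * (c.factorization p : ℤ))
            = F p ^ (ε * (c'.factorization p : ℤ)) * F p ^ ε := by
          rw [if_pos rfl, e2, mul_add, mul_one, zpow_add₀ hFp0]
        rw [e3]
        have e4 : (∏ q ∈ c.primeFactors.erase p,
              F q ^ ((if q = p then ε else ε' q) * (c.factorization q : ℤ)))
            = ∏ q ∈ c.primeFactors.erase p, F q ^ (ε' q * (c'.factorization q : ℤ)) := by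
          refine Finset.prod_congr rfl ?_
          intro q hq
          have hqne : q ≠ p := Finset.ne_of_mem_erase hq
          have hfq : c.factorization q = c'.factorization q := by
            rw [hfacq q, if_neg hqne, zero_add]
          rw [if_neg hqne, hfq]
        rw [e4]
        by_cases hpc'' : p ∈ c'.primeFactors
        · have hset : c'.primeFactors = c.primeFactors := by
            apply Finset.Subset.antisymm hsub
            intro q hq
            by_cases h : q = p
            · exact h ▸ hpc''
            · exact hmem' q hq h
          rw [show c.primeFactors.erase p = c'.primeFactors.erase p by rw [hset]]
          rw [← Finset.mul_prod_erase _ (fun q => F q ^ (ε' q * (c'.factorization q : ℤ))) hpc'']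
          rw [hforced hpc'']
          ring
        · have hα0 : c'.factorization p = 0 :=
            Nat.factorization_eq_zero_of_not_dvd
              (fun h => hpc'' (Nat.mem_primeFactors.mpr ⟨hp, h, hc'0⟩))
          have herase : c.primeFactors.erase p = c'.primeFactors := by
            apply Finset.ext
            intro q
            constructor
            · intro hq
              exact hmem' q (Finset.mem_of_mem_erase hq) (Finset.ne_of_mem_erase hq)
            · intro hq
              exact Finset.mem_erase.mpr ⟨fun h => hpc'' (h ▸ hq), hsub hq⟩
          rw [herase, hα0]
          norm_num
          exact mul_comm _ _
      calc ((a : ℂ) + (b : ℂ) * (Real.sqrt D : ℂ) * I) / (c : ℂ)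
          = (((a₁ : ℂ) + (b₁ : ℂ) * (Real.sqrt D : ℂ) * I) / (c' : ℂ)) * F p ^ ε := hzstep
        _ = (u * ∏ q ∈ c'.primeFactors, F q ^ (ε' q * (c'.factorization q : ℤ))) * F p ^ ε := by
            rw [hzeq']
        _ = u * ∏ q ∈ c.primeFactors,
              F q ^ ((if q = p then ε else ε' q) * (c.factorization q : ℤ)) := by
            rw [key]; ring

/-- **Theorem 3.6 of [JMMM].**
Let `D > 1` be a squarefree integer with `D ≡ 1` or `2 (mod 4)` such that every element of the
ideal class group of `ℚ(√-D)` (equivalently, of `ℤ[√-D]`) has order dividing 2.  Let `a, b` be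
coprime integers and `c > 1` an odd integer with `a² + D b² = c²`, and let
`c = p₁^{α₁} ⋯ p_k^{α_k}` be the prime factorization of `c` (the primes being
`c.primeFactors` and the exponents `c.factorization p`).  For each prime `p ∣ c` let
`(x p, y p)` be positive integers with `(x p)² + D (y p)² = p²` and `gcd(x p, y p, p) = 1`,
and set `ζ_p = (x p + y p · √D · i) / p ∈ ℂ`.  Then, writing `z = (a + b √D i)/c ∈ ℂ`, there
are a sign `u ∈ {1, -1}` and signs `ε p ∈ {1, -1}` such that
`z = u · ∏_{p ∣ c} ζ_p ^ (ε p · α p)`. -/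
theorem factorization_in_G_D
    (D : ℕ) (hD : 1 < D) (hsf : Squarefree D) (hDmod : D % 4 = 1 ∨ D % 4 = 2)
    [IsDomain (ℤ√(-(D : ℤ)))]
    (hclass : ∀ x : ClassGroup (ℤ√(-(D : ℤ))), x ^ 2 = 1)
    (a b : ℤ) (hab : Int.gcd a b = 1)
    (c : ℕ) (hc : 1 < c) (hcodd : Odd c)
    (heq : a ^ 2 + (D : ℤ) * b ^ 2 = (c : ℤ) ^ 2)
    (x y : ℕ → ℕ)
    (hxy : ∀ p ∈ c.primeFactors, 0 < x p ∧ 0 < y p ∧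
        (x p) ^ 2 + D * (y p) ^ 2 = p ^ 2 ∧ Nat.gcd (Nat.gcd (x p) (y p)) p = 1) :
    ∃ (u : ℂ) (ε : ℕ → ℤ), (u = 1 ∨ u = -1) ∧ (∀ p ∈ c.primeFactors, ε p = 1 ∨ ε p = -1) ∧
      ((a : ℂ) + (b : ℂ) * (Real.sqrt D : ℂ) * Complex.I) / (c : ℂ) =
        u * ∏ p ∈ c.primeFactors,
          (((x p : ℂ) + (y p : ℂ) * (Real.sqrt D : ℂ) * Complex.I) / (p : ℂ))
            ^ (ε p * (c.factorization p : ℤ)) := by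
  obtain ⟨u, ε, hu, hε, -, hz⟩ := aux_main D hD hsf c a b hab hcodd heq x y hxy
  exact ⟨u, ε, hu, hε, hz⟩
end

section
/- Let D > 1 be a squarefree integer with D ≡ 1 or 2 (mod 4) such that every element of the ideal class group of ℚ(√−D) has order dividing 2. Let p₁, …, p_k be distinct odd primes with Legendre symbol (−D/pᵢ) = 1, let α₁, …, α_k be positive integers, let u ∈ {1, −1} and ε₁, …, ε_k ∈ {1, −1}, and set z = u · ζ_{p₁}^{ε₁ α₁} ⋯ ζ_{p_k}^{ε_k α_k} ∈ ℂ. If z = (a + b·√D·i)/c where (a, b, c) is a normalized solution of x² + Dy² = z² (i.e., a, b, c positive integers, a² + Db² = c², gcd(a, b, c) = 1) up to the signs of a and b, then c = p₁^{α₁} ⋯ p_k^{α_k}. -/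
open Complex

/-- **Theorem 3.9 of [JMMM].**
Let `D > 1` be a squarefree integer with `D ≡ 1` or `2 (mod 4)` such that every element of the
ideal class group of `ℚ(√-D)` (equivalently, of `ℤ[√-D]`) has order dividing 2.  Let
`p 0, …, p (k-1)` be distinct odd primes with Legendre symbol `(-D / p i) = 1`, with
`ζ_{p i} = (x i + y i · √D · i)/(p i)` built from the unique positive solution
`(x i)² + D (y i)² = (p i)²`, `gcd(x i, y i, p i) = 1`.  Let `α i ≥ 1`, `u ∈ {1, -1}`,
`ε i ∈ {1, -1}`, and set `z = u · ∏ i, ζ_{p i} ^ (ε i · α i)`.  If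
`z = (±a + ±b·√D·i)/c` where `(a, b, c)` is a normalized solution of `x² + D y² = z²`
(positive integers, `a² + D b² = c²`, `gcd(a, b, c) = 1`), then
`c = ∏ i, (p i) ^ (α i)`. -/
theorem c_of_zeta_product
    (D : ℕ) (hD : 1 < D) (hsf : Squarefree D) (hDmod : D % 4 = 1 ∨ D % 4 = 2)
    [IsDomain (ℤ√(-(D : ℤ)))]
    (hclass : ∀ x : ClassGroup (ℤ√(-(D : ℤ))), x ^ 2 = 1)
    (k : ℕ) (p : Fin k → ℕ) (hp : ∀ i, (p i).Prime) (hpodd : ∀ i, p i ≠ 2)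
    (hpdist : Function.Injective p)
    (hleg : ∀ i, @legendreSym (p i) ⟨hp i⟩ (-(D : ℤ)) = 1)
    (x y : Fin k → ℕ)
    (hxy : ∀ i, 0 < x i ∧ 0 < y i ∧ (x i) ^ 2 + D * (y i) ^ 2 = (p i) ^ 2 ∧
        Nat.gcd (Nat.gcd (x i) (y i)) (p i) = 1)
    (α : Fin k → ℕ) (hα : ∀ i, 0 < α i)
    (u : ℂ) (hu : u = 1 ∨ u = -1)
    (ε : Fin k → ℤ) (hε : ∀ i, ε i = 1 ∨ ε i = -1)
    (a b c : ℕ) (ha : 0 < a) (hb : 0 < b) (hc : 0 < c)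
    (habc : a ^ 2 + D * b ^ 2 = c ^ 2) (hgcd : Nat.gcd (Nat.gcd a b) c = 1)
    (s t : ℤ) (hs : s = 1 ∨ s = -1) (ht : t = 1 ∨ t = -1)
    (hz : u * ∏ i,
        (((x i : ℂ) + (y i : ℂ) * (Real.sqrt D : ℂ) * Complex.I) / (p i : ℂ)) ^ (ε i * (α i : ℤ))
      = (((s * a : ℤ) : ℂ) + ((t * b : ℤ) : ℂ) * (Real.sqrt D : ℂ) * Complex.I) / (c : ℂ)) :
    c = ∏ i, (p i) ^ (α i) := by
  classical
  have hD0 : (0:ℝ) ≤ (D:ℝ) := by positivity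
  have hsqD : (Real.sqrt D : ℂ) * (Real.sqrt D : ℂ) = (D : ℂ) := by
    rw [← Complex.ofReal_mul, Real.mul_self_sqrt hD0]
    push_cast; ring
  set SD : ℂ := (Real.sqrt D : ℂ) * I with hSDdef
  have hSD2 : SD * SD = ((-(D:ℤ) : ℤ) : ℂ) := by
    rw [hSDdef, mul_mul_mul_comm, hsqD, I_mul_I]
    push_cast; ring
  set f : ℤ√(-(D:ℤ)) →+* ℂ := Zsqrtd.lift ⟨SD, hSD2⟩ with hfdef
  set π : Fin k → ℤ√(-(D:ℤ)) := fun i => ⟨(x i : ℤ), ε i * (y i : ℤ)⟩ with hπdef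
  set u' : ℤ√(-(D:ℤ)) := if u = 1 then 1 else -1 with hu'def
  set w : ℤ√(-(D:ℤ)) := u' * ∏ i, π i ^ α i with hwdef
  set A : ℤ := w.re with hAdef
  set B : ℤ := w.im with hBdef
  set P : ℕ := ∏ i, p i ^ α i with hPdef
  have hpne : ∀ i, (p i : ℂ) ≠ 0 := fun i => Nat.cast_ne_zero.mpr (hp i).pos.ne'
  have hcne : (c : ℂ) ≠ 0 := Nat.cast_ne_zero.mpr hc.ne'
  have hfu : f u' = u := by
    rcases hu with h | h
    · rw [hu'def, if_pos h, map_one, h]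
    · rw [hu'def, if_neg (by rw [h]; norm_num), map_neg, map_one, h]
  have hfπ : ∀ i, f (π i) = (x i : ℂ) + ((ε i : ℤ) : ℂ) * (y i : ℂ) * SD := by
    intro i
    simp [hfdef, hπdef, Zsqrtd.lift]
  have hfw : f w = u * ∏ i, ((x i : ℂ) + ((ε i : ℤ) : ℂ) * (y i : ℂ) * SD) ^ (α i) := by
    rw [hwdef, map_mul, map_prod, hfu]
    congr 1
    exact Finset.prod_congr rfl fun i _ => by rw [map_pow, hfπ]
  have hfw' : f w = (A : ℂ) + (B : ℂ) * SD := by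
    simp [hfdef, Zsqrtd.lift, hAdef, hBdef]
  -- per-factor identity
  have hfac : ∀ i, (((x i : ℂ) + (y i : ℂ) * (Real.sqrt D : ℂ) * Complex.I) / (p i : ℂ)) ^ (ε i * (α i : ℤ))
      = ((x i : ℂ) + ((ε i : ℤ) : ℂ) * (y i : ℂ) * SD) ^ (α i) / (p i : ℂ) ^ (α i) := by
    intro i
    have hxyc : ((x i : ℂ))^2 + (D:ℂ) * ((y i : ℂ))^2 = ((p i : ℂ))^2 := by
      exact_mod_cast congrArg (Nat.cast : ℕ → ℂ) (hxy i).2.2.1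
    have hnorm : ((x i : ℂ) + (y i : ℂ) * SD) * ((x i : ℂ) - (y i : ℂ) * SD) = (p i : ℂ)^2 := by
      have h : SD * SD = -(D:ℂ) := by rw [hSD2]; push_cast; ring
      linear_combination hxyc - ((y i : ℂ))^2 * h
    have hbase : (x i : ℂ) + (y i : ℂ) * (Real.sqrt D : ℂ) * Complex.I = (x i : ℂ) + (y i : ℂ) * SD := by
      rw [hSDdef]; ring
    have hinv : (((x i : ℂ) + (y i : ℂ) * SD) / (p i : ℂ))⁻¹
        = ((x i : ℂ) - (y i : ℂ) * SD) / (p i : ℂ) := by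
      apply inv_eq_of_mul_eq_one_right
      rw [div_mul_div_comm, hnorm, sq, div_self (mul_ne_zero (hpne i) (hpne i))]
    rcases hε i with h | h
    · rw [hbase, h, one_mul, zpow_natCast, div_pow]
      congr 2
      push_cast; ring
    · rw [hbase, h]
      have : (-1 * (α i : ℤ)) = -(α i : ℤ) := by ring
      rw [this, zpow_neg, zpow_natCast, ← inv_pow, hinv, div_pow]
      congr 2
      push_cast; ring
  -- main equation over ℂ
  have hDn : (∏ i, (p i : ℂ) ^ (α i)) = (P : ℂ) := by
    rw [hPdef]; push_cast; rfl
  have hDne : (∏ i, (p i : ℂ) ^ (α i)) ≠ 0 :=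
    Finset.prod_ne_zero_iff.mpr fun i _ => pow_ne_zero _ (hpne i)
  have hzz : (c:ℂ) * ((A:ℂ) + (B:ℂ) * SD)
      = (P:ℂ) * (((s*a : ℤ):ℂ) + ((t*b : ℤ):ℂ) * SD) := by
    have h1 : u * ∏ i, (((x i : ℂ) + ((ε i : ℤ) : ℂ) * (y i : ℂ) * SD) ^ (α i) / (p i : ℂ) ^ (α i))
        = (((s * a : ℤ) : ℂ) + ((t * b : ℤ) : ℂ) * SD) / (c : ℂ) := by
      have e1 : (((s * a : ℤ) : ℂ) + ((t * b : ℤ) : ℂ) * SD) / (c : ℂ)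
          = (((s * a : ℤ) : ℂ) + ((t * b : ℤ) : ℂ) * (Real.sqrt D : ℂ) * Complex.I) / (c : ℂ) := by
        rw [hSDdef]; ring
      rw [e1, ← hz]
      congr 1
      exact (Finset.prod_congr rfl fun i _ => (hfac i).symm)
    rw [Finset.prod_div_distrib, ← mul_div_assoc] at h1
    have h2 := (div_eq_div_iff hDne hcne).1 h1
    calc (c:ℂ) * ((A:ℂ) + (B:ℂ) * SD) = (u * ∏ i, ((x i : ℂ) + ((ε i : ℤ) : ℂ) * (y i : ℂ) * SD) ^ (α i)) * c := by
          rw [← hfw', hfw]; ring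
      _ = (((s*a : ℤ):ℂ) + ((t*b : ℤ):ℂ) * SD) * ∏ i, (p i : ℂ) ^ (α i) := h2
      _ = (P:ℂ) * (((s*a : ℤ):ℂ) + ((t*b : ℤ):ℂ) * SD) := by rw [hDn]; ring
  -- split into real/imaginary integer equations
  have hsplit : ∀ m n m' n' : ℤ, ((m:ℂ) + (n:ℂ) * SD = (m':ℂ) + (n':ℂ) * SD) → m = m' ∧ n = n' := by
    intro m n m' n' h
    rw [hSDdef] at h
    have hre := congrArg Complex.re h
    have him := congrArg Complex.im h
    simp at hre him
    constructor
    · exact_mod_cast hre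
    · rcases him with h' | h'
      · exact_mod_cast h'
      · exfalso
        have hDpos : (0:ℝ) < Real.sqrt D := Real.sqrt_pos.mpr (by positivity)
        exact absurd h' (by positivity)
  have hzz' : ((c * A : ℤ) : ℂ) + ((c * B : ℤ) : ℂ) * SD
      = (((P : ℤ) * (s * a) : ℤ) : ℂ) + (((P : ℤ) * (t * b) : ℤ) : ℂ) * SD := by
    push_cast
    push_cast at hzz
    linear_combination hzz
  obtain ⟨h1, h2⟩ := hsplit _ _ _ _ hzz'
  -- natAbs equations
  have hsabs : s.natAbs = 1 := by rcases hs with h | h <;> simp [h]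
  have htabs : t.natAbs = 1 := by rcases ht with h | h <;> simp [h]
  have hA1 : c * A.natAbs = P * a := by
    have := congrArg Int.natAbs h1
    simpa [Int.natAbs_mul, hsabs] using this
  have hB1 : c * B.natAbs = P * b := by
    have := congrArg Int.natAbs h2
    simpa [Int.natAbs_mul, htabs] using this
  -- gcd a b = 1
  have hab : Nat.gcd a b = 1 := by
    have hg : Nat.gcd a b ∣ c := by
      have hg2 : Nat.gcd a b ^ 2 ∣ c ^ 2 := by
        rw [← habc]
        exact dvd_add (pow_dvd_pow_of_dvd (Nat.gcd_dvd_left a b) 2)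
          (Dvd.dvd.mul_left (pow_dvd_pow_of_dvd (Nat.gcd_dvd_right a b) 2) D)
      exact (Nat.pow_dvd_pow_iff (two_ne_zero)).1 hg2
    exact (Nat.gcd_eq_left hg).symm.trans hgcd
  -- c ∣ P
  have hcP : c ∣ P := by
    have d1 : c ∣ P * a := ⟨A.natAbs, hA1.symm⟩
    have d2 : c ∣ P * b := ⟨B.natAbs, hB1.symm⟩
    have hd := Nat.dvd_gcd d1 d2
    rwa [Nat.gcd_mul_left, hab, mul_one] at hd
  -- key non-divisibility
  have key : ∀ j, ¬ ((p j : ℤ) ∣ A ∧ (p j : ℤ) ∣ B) := by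
    rintro j ⟨hdA, hdB⟩
    haveI : Fact (p j).Prime := ⟨hp j⟩
    have hne0 : ((-(D:ℤ) : ℤ) : ZMod (p j)) ≠ 0 := by
      intro h0
      have h := (legendreSym.eq_zero_iff (p j) (-(D:ℤ))).mpr h0
      rw [hleg j] at h
      norm_num at h
    obtain ⟨r, hr⟩ := ((legendreSym.eq_one_iff (p j) hne0).mp (hleg j))
    -- hr : ((-(D:ℤ):ℤ) : ZMod (p j)) = r * r
    have claim : ∀ r' : ZMod (p j), ((-(D:ℤ) : ℤ) : ZMod (p j)) = r' * r' →
        (x j : ZMod (p j)) + ((ε j : ℤ) : ZMod (p j)) * (y j : ZMod (p j)) * r' = 0 := by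
      intro r' hr'
      set ψ : ℤ√(-(D:ℤ)) →+* ZMod (p j) := Zsqrtd.lift ⟨r', hr'.symm⟩ with hψdef
      have hψap : ∀ z : ℤ√(-(D:ℤ)), ψ z = (z.re : ZMod (p j)) + (z.im : ZMod (p j)) * r' := by
        intro z; simp [hψdef, Zsqrtd.lift]
      have hψw : ψ w = 0 := by
        rw [hψap, ← hAdef, ← hBdef,
          (ZMod.intCast_zmod_eq_zero_iff_dvd _ _).mpr hdA,
          (ZMod.intCast_zmod_eq_zero_iff_dvd _ _).mpr hdB]
        ring
      have hψu : ψ u' ≠ 0 := by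
        rcases hu with h | h
        · have : u' = 1 := by simp [hu'def, h]
          rw [this, map_one]; exact one_ne_zero
        · have h1 : u ≠ 1 := by rw [h]; norm_num
          have : u' = -1 := by simp [hu'def, h1]
          rw [this, map_neg, map_one]
          simp
      have hprod : (∏ i, ψ (π i) ^ α i) = 0 := by
        have hw0 : ψ u' * ∏ i, ψ (π i) ^ α i = 0 := by
          rw [← hψw, hwdef, map_mul, map_prod]
          simp [map_pow]
        rcases mul_eq_zero.mp hw0 with h | h
        · exact absurd h hψu
        · exact h
      obtain ⟨i, -, hi0⟩ := Finset.prod_eq_zero_iff.mp hprod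
      have hi : ψ (π i) = 0 := pow_eq_zero_iff (hα i).ne' |>.mp hi0
      have hψπ : ψ (π i) = (x i : ZMod (p j)) + ((ε i : ℤ) : ZMod (p j)) * (y i : ZMod (p j)) * r' := by
        rw [hψap]
        simp [hπdef]
      have hε2 : ((ε i : ℤ) : ZMod (p j))^2 = 1 := by
        rcases hε i with h | h <;> simp [h]
      have hxyc : (x i : ZMod (p j))^2 + (D : ZMod (p j)) * (y i : ZMod (p j))^2
          = (p i : ZMod (p j))^2 := by
        exact_mod_cast congrArg (Nat.cast : ℕ → ZMod (p j)) (hxy i).2.2.1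
      have hpi0 : ((p i : ZMod (p j)))^2 = 0 := by
        have hr'' : r' * r' = -(D : ZMod (p j)) := by
          rw [← hr']; push_cast; ring
        have e : ((x i : ZMod (p j)) + ((ε i : ℤ) : ZMod (p j)) * (y i : ZMod (p j)) * r')
            * ((x i : ZMod (p j)) - ((ε i : ℤ) : ZMod (p j)) * (y i : ZMod (p j)) * r')
            = (p i : ZMod (p j))^2 := by
          linear_combination hxyc - ((y i : ZMod (p j)))^2 * (r' * r') * hε2
            - ((y i : ZMod (p j)))^2 * hr''
        rw [← e, ← hψπ, hi, zero_mul]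
      have hpi : (p i : ZMod (p j)) = 0 := pow_eq_zero_iff two_ne_zero |>.mp hpi0
      have hdvd : p j ∣ p i := (ZMod.natCast_eq_zero_iff _ _).mp hpi
      have hij : i = j := hpdist ((Nat.prime_dvd_prime_iff_eq (hp j) (hp i)).mp hdvd).symm
      rw [hψπ] at hi
      rw [hij] at hi
      exact hi
    have h1' := claim r hr
    have h2' := claim (-r) (by rw [hr]; ring)
    have h2ne : (2 : ZMod (p j)) ≠ 0 := by
      intro h0
      have hd2 : p j ∣ 2 := by
        have := (ZMod.natCast_eq_zero_iff 2 (p j)).mp (by exact_mod_cast h0)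
        exact this
      exact hpodd j ((Nat.prime_dvd_prime_iff_eq (hp j) Nat.prime_two).mp hd2)
    have hrne : r ≠ 0 := by
      intro h0
      apply hne0
      rw [hr, h0, mul_zero]
    have hεne : ((ε j : ℤ) : ZMod (p j)) ≠ 0 := by
      rcases hε j with h | h <;> simp [h]
    have hx0 : (x j : ZMod (p j)) = 0 := by
      have hsum : (2 : ZMod (p j)) * (x j : ZMod (p j)) = 0 := by
        linear_combination h1' + h2'
      rcases mul_eq_zero.mp hsum with h | h
      · exact absurd h h2ne
      · exact h
    have hy0 : (y j : ZMod (p j)) = 0 := by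
      have hdiff : (2 : ZMod (p j)) * (((ε j : ℤ) : ZMod (p j)) * (y j : ZMod (p j)) * r) = 0 := by
        linear_combination h1' - h2'
      rcases mul_eq_zero.mp hdiff with h | h
      · exact absurd h h2ne
      rcases mul_eq_zero.mp h with h' | h'
      · rcases mul_eq_zero.mp h' with h'' | h''
        · exact absurd h'' hεne
        · exact h''
      · exact absurd h' hrne
    have hdx : p j ∣ x j := (ZMod.natCast_eq_zero_iff _ _).mp hx0
    have hdy : p j ∣ y j := (ZMod.natCast_eq_zero_iff _ _).mp hy0
    have hfin : p j ∣ Nat.gcd (Nat.gcd (x j) (y j)) (p j) :=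
      Nat.dvd_gcd (Nat.dvd_gcd hdx hdy) dvd_rfl
    rw [(hxy j).2.2.2] at hfin
    have := Nat.dvd_one.mp hfin
    exact absurd this (hp j).one_lt.ne'
  -- P ∣ c
  have hPc : P ∣ c := by
    have d1 : P ∣ c * A.natAbs := hA1 ▸ Dvd.intro a rfl
    have d2 : P ∣ c * B.natAbs := hB1 ▸ Dvd.intro b rfl
    have hd := Nat.dvd_gcd d1 d2
    rw [Nat.gcd_mul_left] at hd
    have hcop : Nat.Coprime P (Nat.gcd A.natAbs B.natAbs) := by
      apply Nat.Coprime.prod_left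
      intro i _
      apply Nat.Coprime.pow_left
      rw [Nat.Prime.coprime_iff_not_dvd (hp i)]
      intro hdvd
      exact key i ⟨(Int.natCast_dvd_natCast.mpr (hdvd.trans (Nat.gcd_dvd_left _ _))).trans
          (Int.natAbs_dvd.mpr dvd_rfl),
        (Int.natCast_dvd_natCast.mpr (hdvd.trans (Nat.gcd_dvd_right _ _))).trans
          (Int.natAbs_dvd.mpr dvd_rfl)⟩
    exact hcop.dvd_of_dvd_mul_right hd
  exact Nat.dvd_antisymm hcP hPc
end

section
/- Let D > 1 be a squarefree integer with D ≡ 1 or 2 (mod 4) such that every element of the ideal class group of ℚ(√−D) has order dividing 2. Then the multiplicative group G_D(ℚ) = {a + b·√D·i ∈ ℂ : a, b ∈ ℚ, a² + Db² = 1} decomposes as {1, −1} × F, where F is free abelian on the set {ζ_p : p odd prime with (−D/p) = 1}: every element z ∈ G_D(ℚ) admits a unique representation z = u · ∏_p ζ_p^{e_p}, where u ∈ {1, −1}, the product runs over the odd primes p with Legendre symbol (−D/p) = 1, the exponents e_p are integers, and all but finitely many e_p are zero. -/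
open Complex

noncomputable def phiD (D : ℕ) : ℤ√(-(D:ℤ)) →+* ℂ :=
  Zsqrtd.lift ⟨(Real.sqrt D : ℂ) * Complex.I, by
    have h : (Real.sqrt D : ℝ) * Real.sqrt D = (D:ℝ) := Real.mul_self_sqrt (by positivity)
    calc ((Real.sqrt D : ℂ) * Complex.I) * ((Real.sqrt D : ℂ) * Complex.I)
        = ((Real.sqrt D * Real.sqrt D : ℝ) : ℂ) * (Complex.I * Complex.I) := by push_cast; ring
      _ = ((-(D:ℤ) : ℤ) : ℂ) := by rw [Complex.I_mul_I, h]; push_cast; ring⟩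

lemma phiD_apply (D : ℕ) (z : ℤ√(-(D:ℤ))) :
    phiD D z = (z.re : ℂ) + (z.im : ℂ) * ((Real.sqrt D : ℂ) * Complex.I) := by
  simp [phiD]

lemma phiD_injective (D : ℕ) (hD : 0 < D) : Function.Injective (phiD D) :=
  Zsqrtd.lift_injective _ (by
    intro n hn
    have h1 : (0:ℤ) < D := by exact_mod_cast hD
    nlinarith [mul_self_nonneg n])

noncomputable def zet (D : ℕ) (x y : ℕ → ℕ) (p : ℕ) : ℂ :=
  ((x p : ℂ) + (y p : ℂ) * (Real.sqrt D : ℂ) * Complex.I) / (p : ℂ)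

lemma zet_eq (D : ℕ) (x y : ℕ → ℕ) (p : ℕ) :
    zet D x y p = phiD D ⟨x p, y p⟩ / p := by
  rw [zet, phiD_apply]
  norm_num [mul_assoc]

lemma zsq_mul_conj (D : ℕ) (X Y : ℤ) :
    (⟨X, Y⟩ * ⟨X, -Y⟩ : ℤ√(-(D:ℤ))) = ⟨X^2 + D*Y^2, 0⟩ := by
  ext <;> simp [Zsqrtd.re_mul, Zsqrtd.im_mul] <;> ring

lemma zet_ne_zero (D : ℕ) (hD : 0 < D) (x y : ℕ → ℕ) (p : ℕ) (hp : 0 < p) (hx : 0 < x p) :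
    zet D x y p ≠ 0 := by
  rw [zet_eq]
  apply div_ne_zero
  · intro h0
    have := phiD_injective D hD (a₁ := ⟨x p, y p⟩) (a₂ := 0) (by simpa using h0)
    have : ((x p : ℤ)) = 0 := congrArg Zsqrtd.re this
    omega
  · exact_mod_cast hp.ne'

lemma phi_eq_mul_zet_zpow (D : ℕ) (hD : 0 < D) (x y : ℕ → ℕ) (p : ℕ) (hp : 0 < p)
    (hnorm : ((x p : ℤ))^2 + (D:ℤ)*((y p : ℤ))^2 = (p:ℤ)^2) (s : ℤ) (hs : s = 1 ∨ s = -1) :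
    phiD D ⟨(x p : ℤ), s * (y p : ℤ)⟩ = (p:ℂ) * zet D x y p ^ s := by
  have hpne : (p:ℂ) ≠ 0 := by exact_mod_cast hp.ne'
  rcases hs with h | h
  · subst h
    rw [zpow_one, zet_eq, one_mul]
    field_simp
  · subst h
    have hmul : zet D x y p * (phiD D ⟨(x p : ℤ), -(y p : ℤ)⟩ / p) = 1 := by
      rw [zet_eq, div_mul_div_comm, ← map_mul, zsq_mul_conj, phiD_apply]
      simp only [hnorm]
      push_cast
      field_simp
      ring
    have hinv : zet D x y p ^ (-1 : ℤ) = phiD D ⟨(x p : ℤ), -(y p : ℤ)⟩ / p := by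
      rw [zpow_neg_one]
      exact inv_eq_of_mul_eq_one_right hmul
    rw [hinv]
    rw [show ((-1 : ℤ) * (y p : ℤ)) = -(y p : ℤ) by ring]
    field_simp


-- prime divisor facts
lemma prime_facts (D : ℕ) (hD : 1 < D) (hsf : Squarefree D) (hDmod : D % 4 = 1 ∨ D % 4 = 2)
    (m n : ℤ) (c : ℕ) (hgcd : Int.gcd m n = 1) (heq : m^2 + (D:ℤ)*n^2 = (c:ℤ)^2)
    (p : ℕ) (hp : p.Prime) (hpc : p ∣ c) :
    ¬((p:ℤ) ∣ m) ∧ ¬((p:ℤ) ∣ n) ∧ ¬((p:ℤ) ∣ (D:ℤ)) ∧ p ≠ 2 ∧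
      @legendreSym p ⟨hp⟩ (-(D:ℤ)) = 1 := by
  have hpz : (p:ℤ) ∣ (c:ℤ) := Int.natCast_dvd_natCast.mpr hpc
  have hp2z : (p:ℤ)^2 ∣ (c:ℤ)^2 := pow_dvd_pow_of_dvd hpz 2
  have hprime : Prime (p:ℤ) := Nat.prime_iff_prime_int.mp hp
  -- p does not divide D
  have hpD : ¬((p:ℤ) ∣ (D:ℤ)) := by
    intro hdvd
    have hm2 : (p:ℤ) ∣ m^2 := by
      have : (p:ℤ) ∣ (D:ℤ)*n^2 := hdvd.mul_right _
      have h2 : (p:ℤ) ∣ (c:ℤ)^2 := dvd_pow hpz two_ne_zero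
      have : (p:ℤ) ∣ (c:ℤ)^2 - (D:ℤ)*n^2 := dvd_sub h2 this
      simpa [← heq] using this
    have hpm : (p:ℤ) ∣ m := hprime.dvd_of_dvd_pow hm2
    -- p^2 divides D * n^2
    have h3 : (p:ℤ)^2 ∣ (D:ℤ)*n^2 := by
      have h4 : (p:ℤ)^2 ∣ m^2 := pow_dvd_pow_of_dvd hpm 2
      have : (p:ℤ)^2 ∣ (c:ℤ)^2 - m^2 := dvd_sub hp2z h4
      have heq2 : (D:ℤ)*n^2 = (c:ℤ)^2 - m^2 := by linarith
      rwa [heq2]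
    -- write D = p * D', p ∤ D'
    obtain ⟨D', hD'⟩ := hdvd
    have hpD' : ¬ ((p:ℤ) ∣ D') := by
      intro hd
      have : (p:ℤ)*(p:ℤ) ∣ (D:ℤ) := by
        obtain ⟨t, ht⟩ := hd
        exact ⟨t, by rw [hD', ht]; ring⟩
      have : (p*p : ℕ) ∣ D := by exact_mod_cast this
      exact hp.not_isUnit (hsf p this)
    have hpn : (p:ℤ) ∣ n := by
      have : (p:ℤ)^2 ∣ (p:ℤ) * (D' * n^2) := by
        rw [show (p:ℤ) * (D' * n^2) = (D:ℤ)*n^2 by rw [hD']; ring]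
        exact h3
      have hpne : (p:ℤ) ≠ 0 := by exact_mod_cast hp.ne_zero
      have h5 : (p:ℤ) ∣ D' * n^2 := by
        rcases this with ⟨t, ht⟩
        exact ⟨t, mul_left_cancel₀ hpne (by rw [show (p:ℤ) * (D' * n ^ 2) = (p:ℤ)^2 * t from ht]; ring)⟩
      rcases hprime.dvd_mul.mp h5 with h | h
      · exact absurd h hpD'
      · exact hprime.dvd_of_dvd_pow h
    have : (p:ℤ) ∣ Int.gcd m n := Int.dvd_coe_gcd hpm hpn
    rw [hgcd] at this
    exact hprime.not_unit (isUnit_of_dvd_one this)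
  -- p does not divide m
  have hpm : ¬((p:ℤ) ∣ m) := by
    intro hm
    have hn2 : (p:ℤ) ∣ (D:ℤ)*n^2 := by
      have h2 : (p:ℤ) ∣ (c:ℤ)^2 := dvd_pow hpz two_ne_zero
      have h4 : (p:ℤ) ∣ m^2 := dvd_pow hm two_ne_zero
      have : (p:ℤ) ∣ (c:ℤ)^2 - m^2 := dvd_sub h2 h4
      have heq2 : (D:ℤ)*n^2 = (c:ℤ)^2 - m^2 := by linarith
      rwa [heq2]
    have hpn : (p:ℤ) ∣ n := by
      rcases hprime.dvd_mul.mp hn2 with h | h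
      · exact absurd h hpD
      · exact hprime.dvd_of_dvd_pow h
    have : (p:ℤ) ∣ Int.gcd m n := Int.dvd_coe_gcd hm hpn
    rw [hgcd] at this
    exact hprime.not_unit (isUnit_of_dvd_one this)
  have hpn : ¬((p:ℤ) ∣ n) := by
    intro hn
    have hm2 : (p:ℤ) ∣ m^2 := by
      have : (p:ℤ) ∣ (D:ℤ)*n^2 := Dvd.dvd.mul_left (dvd_pow hn two_ne_zero) _
      have h2 : (p:ℤ) ∣ (c:ℤ)^2 := dvd_pow hpz two_ne_zero
      have h3 : (p:ℤ) ∣ (c:ℤ)^2 - (D:ℤ)*n^2 := dvd_sub h2 this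
      have heq2 : m^2 = (c:ℤ)^2 - (D:ℤ)*n^2 := by linarith
      rwa [heq2]
    exact hpm (hprime.dvd_of_dvd_pow hm2)
  -- p ≠ 2
  have hp2 : p ≠ 2 := by
    intro h2
    subst h2
    -- mod 4 argument
    have hmodeq : ((m : ZMod 4))^2 + (D:ZMod 4) * (n:ZMod 4)^2 = ((c:ℕ) : ZMod 4)^2 := by
      have := congrArg (fun z : ℤ => (z : ZMod 4)) heq
      push_cast at this
      simpa using this
    have hm4 : (m : ZMod 4) = 1 ∨ (m : ZMod 4) = 3 := by
      have hmod : m % 4 = 1 ∨ m % 4 = 3 := by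
        have : ¬ ((2:ℤ) ∣ m) := hpm
        omega
      rcases hmod with h | h
      · left; rw [← ZMod.intCast_mod m 4]; norm_num [h]
      · right; rw [← ZMod.intCast_mod m 4]; norm_num [h]
    have hn4 : (n : ZMod 4) = 1 ∨ (n : ZMod 4) = 3 := by
      have hmod : n % 4 = 1 ∨ n % 4 = 3 := by
        have : ¬ ((2:ℤ) ∣ n) := hpn
        omega
      rcases hmod with h | h
      · left; rw [← ZMod.intCast_mod n 4]; norm_num [h]
      · right; rw [← ZMod.intCast_mod n 4]; norm_num [h]
    have hc4 : ((c:ℕ) : ZMod 4) = 0 ∨ ((c:ℕ) : ZMod 4) = 2 := by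
      have hmod : c % 4 = 0 ∨ c % 4 = 2 := by omega
      rcases hmod with h | h
      · left; rw [← ZMod.natCast_mod c 4, h]; rfl
      · right; rw [← ZMod.natCast_mod c 4, h]; rfl
    have hD4 : (D : ZMod 4) = 1 ∨ (D : ZMod 4) = 2 := by
      rcases hDmod with h | h
      · left; rw [← ZMod.natCast_mod D 4, h]; rfl
      · right; rw [← ZMod.natCast_mod D 4, h]; rfl
    revert hmodeq
    have : ∀ (M N C E : ZMod 4), (M = 1 ∨ M = 3) → (N = 1 ∨ N = 3) →
        (C = 0 ∨ C = 2) → (E = 1 ∨ E = 2) → M^2 + E*N^2 ≠ C^2 := by decide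
    exact this _ _ _ _ hm4 hn4 hc4 hD4
  -- legendre symbol
  refine ⟨hpm, hpn, hpD, hp2, ?_⟩
  haveI : Fact p.Prime := ⟨hp⟩
  have hD0 : ((-(D:ℤ) : ℤ) : ZMod p) ≠ 0 := by
    rw [Ne, ZMod.intCast_zmod_eq_zero_iff_dvd]
    intro hdvd
    exact hpD ((dvd_neg).mp hdvd)
  rw [legendreSym.eq_one_iff p hD0]
  -- -D = (m/n)^2 in ZMod p
  have hmodeq : ((m : ZMod p))^2 + (D:ZMod p) * (n:ZMod p)^2 = 0 := by
    have := congrArg (fun z : ℤ => (z : ZMod p)) heq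
    push_cast at this
    have hc0 : ((c:ℕ) : ZMod p) = 0 := (ZMod.natCast_eq_zero_iff c p).mpr hpc
    rw [hc0] at this
    simpa using this
  have hn0 : (n : ZMod p) ≠ 0 := by
    rw [Ne, ZMod.intCast_zmod_eq_zero_iff_dvd]; exact hpn
  refine ⟨(m : ZMod p) * (n : ZMod p)⁻¹, ?_⟩
  have hinv : (n : ZMod p) * (n : ZMod p)⁻¹ = 1 := ZMod.mul_inv_of_unit _ (Ne.isUnit hn0)
  push_cast
  field_simp
  have : (D:ZMod p) * (n:ZMod p)^2 = - ((m : ZMod p))^2 := by linear_combination hmodeq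
  linear_combination -this


lemma descent (D : ℕ) (m n : ℤ) (c p : ℕ) (hp : p.Prime) (hpc : p ∣ c)
    (hgcd : Int.gcd m n = 1) (heq : m^2 + (D:ℤ)*n^2 = (c:ℤ)^2)
    (hpm : ¬((p:ℤ) ∣ m)) (hpn : ¬((p:ℤ) ∣ n)) (hpD : ¬((p:ℤ) ∣ (D:ℤ))) (hp2 : p ≠ 2)
    (X Y : ℤ) (hXY : X^2 + (D:ℤ)*Y^2 = (p:ℤ)^2) (hXYg : ¬((p:ℤ) ∣ X ∧ (p:ℤ) ∣ Y)) :
    ∃ s m' n' : ℤ, (s = 1 ∨ s = -1) ∧ Int.gcd m' n' = 1 ∧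
      m'^2 + (D:ℤ)*n'^2 = ((c/p : ℕ):ℤ)^2 ∧
      (⟨m, n⟩ : ℤ√(-(D:ℤ))) = ⟨m', n'⟩ * ⟨X, s*Y⟩ := by
  have hprime : Prime (p:ℤ) := Nat.prime_iff_prime_int.mp hp
  have hpne : (p:ℤ) ≠ 0 := by exact_mod_cast hp.ne_zero
  have hpX : ¬((p:ℤ) ∣ X) := by
    intro hX
    have : (p:ℤ) ∣ (D:ℤ)*Y^2 := by
      have h1 : (p:ℤ) ∣ (p:ℤ)^2 := dvd_pow_self _ two_ne_zero
      have h2 : (p:ℤ) ∣ X^2 := dvd_pow hX two_ne_zero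
      have : (p:ℤ) ∣ (p:ℤ)^2 - X^2 := dvd_sub h1 h2
      have e : (D:ℤ)*Y^2 = (p:ℤ)^2 - X^2 := by linarith
      rwa [e]
    rcases hprime.dvd_mul.mp this with h | h
    · exact hpD h
    · exact hXYg ⟨hX, hprime.dvd_of_dvd_pow h⟩
  have hpY : ¬((p:ℤ) ∣ Y) := by
    intro hY
    have : (p:ℤ) ∣ X^2 := by
      have h1 : (p:ℤ) ∣ (p:ℤ)^2 := dvd_pow_self _ two_ne_zero
      have h2 : (p:ℤ) ∣ (D:ℤ)*Y^2 := Dvd.dvd.mul_left (dvd_pow hY two_ne_zero) _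
      have : (p:ℤ) ∣ (p:ℤ)^2 - (D:ℤ)*Y^2 := dvd_sub h1 h2
      have e : X^2 = (p:ℤ)^2 - (D:ℤ)*Y^2 := by linarith
      rwa [e]
    exact hXYg ⟨hprime.dvd_of_dvd_pow this, hY⟩
  -- choose sign s with p ∣ n*X - s*m*Y
  have hdvdprod : (p:ℤ) ∣ (n*X - m*Y) * (n*X + m*Y) := by
    have e : (n*X - m*Y) * (n*X + m*Y) = n^2*(p:ℤ)^2 - Y^2*(c:ℤ)^2 := by
      linear_combination n^2 * hXY - Y^2 * heq
    rw [e]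
    exact dvd_sub (Dvd.dvd.mul_left (dvd_pow_self _ two_ne_zero) _)
      (Dvd.dvd.mul_left (dvd_pow (Int.natCast_dvd_natCast.mpr hpc) two_ne_zero) _)
  obtain ⟨s, hs, hB1⟩ : ∃ s : ℤ, (s = 1 ∨ s = -1) ∧ (p:ℤ) ∣ (n*X - s*m*Y) := by
    rcases hprime.dvd_mul.mp hdvdprod with h | h
    · exact ⟨1, Or.inl rfl, by simpa using h⟩
    · exact ⟨-1, Or.inr rfl, by rw [show n*X - (-1)*m*Y = n*X + m*Y by ring]; exact h⟩
  have hs2 : s^2 = 1 := by rcases hs with h|h <;> simp [h]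
  set B : ℤ := n*X - s*m*Y with hB
  set A : ℤ := m*X + s*(D:ℤ)*n*Y with hA
  -- p does not divide n*X + s*m*Y
  have hnot : ¬ ((p:ℤ) ∣ (n*X + s*m*Y)) := by
    intro hdvd
    have h2 : (p:ℤ) ∣ 2*(n*X) := by
      have := dvd_add hB1 hdvd
      rwa [show (n*X - s*m*Y) + (n*X + s*m*Y) = 2*(n*X) by ring] at this
    rcases hprime.dvd_mul.mp h2 with h | h
    · have h2' : p ∣ 2 := Int.natCast_dvd_natCast.mp (by exact_mod_cast h)
      exact hp2 ((Nat.prime_dvd_prime_iff_eq hp Nat.prime_two).mp h2')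
    · rcases hprime.dvd_mul.mp h with h' | h'
      · exact hpn h'
      · exact hpX h'
  -- p^2 divides B
  have hB2 : (p:ℤ)^2 ∣ B := by
    have key : (p:ℤ)^2 ∣ B * (n*X + s*m*Y) := by
      have e : B * (n*X + s*m*Y) = n^2*(p:ℤ)^2 - Y^2*(c:ℤ)^2 := by
        linear_combination n^2 * hXY - Y^2 * heq - (m*Y)^2*hs2
      rw [e]
      have h1 : (p:ℤ)^2 ∣ n^2*(p:ℤ)^2 := Dvd.dvd.mul_left dvd_rfl _
      have h2 : (p:ℤ)^2 ∣ Y^2*(c:ℤ)^2 :=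
        Dvd.dvd.mul_left (pow_dvd_pow_of_dvd (Int.natCast_dvd_natCast.mpr hpc) 2) _
      exact dvd_sub h1 h2
    have hcop : IsCoprime ((p:ℤ)^2) (n*X + s*m*Y) :=
      IsCoprime.pow_left (hprime.coprime_iff_not_dvd.mpr hnot)
    exact hcop.dvd_of_dvd_mul_right key
  -- p^2 divides A
  have hA2 : (p:ℤ)^2 ∣ A := by
    have key : (p:ℤ)^2 ∣ A * n := by
      have e : A * n = m * B + s*(c:ℤ)^2*Y := by linear_combination s*Y*heq
      rw [e]
      exact dvd_add (hB2.mul_left m)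
        (by
          have : (p:ℤ)^2 ∣ (c:ℤ)^2 := pow_dvd_pow_of_dvd (Int.natCast_dvd_natCast.mpr hpc) 2
          exact (this.mul_left s).mul_right Y)
    have hcop : IsCoprime ((p:ℤ)^2) n :=
      IsCoprime.pow_left (hprime.coprime_iff_not_dvd.mpr hpn)
    exact hcop.dvd_of_dvd_mul_right key
  obtain ⟨m', hm'⟩ := hA2
  obtain ⟨n', hn'⟩ := hB2
  have hp2ne : ((p:ℤ)^2) ≠ 0 := pow_ne_zero _ hpne
  -- key identities
  have idm : m'*X - s*(D:ℤ)*n'*Y = m := by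
    have e : (p:ℤ)^2 * (m'*X - s*(D:ℤ)*n'*Y) = (p:ℤ)^2 * m := by
      have : A*X - s*(D:ℤ)*B*Y = m * (p:ℤ)^2 := by linear_combination m*hXY + (D:ℤ)*m*Y^2*hs2
      calc (p:ℤ)^2 * (m'*X - s*(D:ℤ)*n'*Y) = A*X - s*(D:ℤ)*B*Y := by rw [hm', hn']; ring
        _ = (p:ℤ)^2 * m := by rw [this]; ring
    exact mul_left_cancel₀ hp2ne e
  have idn : s*m'*Y + n'*X = n := by
    have e : (p:ℤ)^2 * (s*m'*Y + n'*X) = (p:ℤ)^2 * n := by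
      have : s*A*Y + B*X = n * (p:ℤ)^2 := by linear_combination n*hXY + (D:ℤ)*n*Y^2*hs2
      calc (p:ℤ)^2 * (s*m'*Y + n'*X) = s*A*Y + B*X := by rw [hm', hn']; ring
        _ = (p:ℤ)^2 * n := by rw [this]; ring
    exact mul_left_cancel₀ hp2ne e
  refine ⟨s, m', n', hs, ?_, ?_, ?_⟩
  · -- gcd m' n' = 1
    rw [← Int.isCoprime_iff_gcd_eq_one]
    have hmn : IsCoprime m n := Int.isCoprime_iff_gcd_eq_one.mpr hgcd
    obtain ⟨u, v, huv⟩ := hmn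
    exact ⟨u*X + v*s*Y, -u*s*(D:ℤ)*Y + v*X, by linear_combination huv + u*idm + v*idn⟩
  · -- norm
    have hc : (c:ℤ) = ((c/p:ℕ):ℤ) * (p:ℤ) := by
      rw [← Int.natCast_mul]
      exact_mod_cast (Nat.div_mul_cancel hpc).symm
    have e : (p:ℤ)^4 * (m'^2 + (D:ℤ)*n'^2) = (p:ℤ)^4 * ((c/p:ℕ):ℤ)^2 := by
      have e2 : A^2 + (D:ℤ)*B^2 = (c:ℤ)^2 * (p:ℤ)^2 := by
        linear_combination (X^2+(D:ℤ)*Y^2)*heq + (c:ℤ)^2*hXY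
          + ((D:ℤ)^2*n^2*Y^2+(D:ℤ)*m^2*Y^2)*hs2
      calc (p:ℤ)^4 * (m'^2 + (D:ℤ)*n'^2) = A^2 + (D:ℤ)*B^2 := by rw [hm', hn']; ring
        _ = (p:ℤ)^4 * ((c/p:ℕ):ℤ)^2 := by rw [e2, hc]; ring
    have h4ne : ((p:ℤ)^4) ≠ 0 := pow_ne_zero _ hpne
    exact mul_left_cancel₀ h4ne e
  · -- product identity in Zsqrtd
    ext <;> simp [Zsqrtd.re_mul, Zsqrtd.im_mul]
    · linear_combination -idm
    · linear_combination -idn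


def GoodP (D p : ℕ) : Prop := ∃ hp : p.Prime, p ≠ 2 ∧ @legendreSym p ⟨hp⟩ (-(D:ℤ)) = 1

lemma exists_rep (D : ℕ) (hD : 1 < D) (hsf : Squarefree D) (hDmod : D % 4 = 1 ∨ D % 4 = 2)
    (x y : ℕ → ℕ)
    (hxy : ∀ p : ℕ, (hp : p.Prime) → p ≠ 2 → @legendreSym p ⟨hp⟩ (-(D : ℤ)) = 1 →
        0 < x p ∧ 0 < y p ∧ (x p) ^ 2 + D * (y p) ^ 2 = p ^ 2 ∧
          Nat.gcd (Nat.gcd (x p) (y p)) p = 1) :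
    ∀ c : ℕ, ∀ m n : ℤ, Int.gcd m n = 1 → m^2 + (D:ℤ)*n^2 = (c:ℤ)^2 →
    ∃ u : ℂ, ∃ e : ℕ →₀ ℤ, (u = 1 ∨ u = -1) ∧
      (∀ p ∈ e.support, GoodP D p) ∧
      phiD D ⟨m, n⟩ = (c:ℂ) * (u * e.prod (fun q k => zet D x y q ^ k)) := by
  intro c
  induction c using Nat.strong_induction_on with
  | _ c ih =>
    intro m n hgcd heq
    have hD' : (1:ℤ) < (D:ℤ) := by exact_mod_cast hD
    rcases eq_or_ne c 0 with rfl | hc0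
    · exfalso
      norm_num at heq
      have hm : m = 0 := by
        nlinarith [sq_nonneg m, sq_nonneg n, mul_nonneg (by positivity : (0:ℤ) ≤ (D:ℤ)) (sq_nonneg n)]
      have hn : n = 0 := by
        rw [hm] at heq; nlinarith [sq_nonneg n]
      rw [hm, hn] at hgcd
      simp at hgcd
    rcases eq_or_ne c 1 with rfl | hc1
    · norm_num at heq
      have hn : n = 0 := by
        nlinarith [sq_nonneg m, sq_nonneg n, mul_nonneg (by omega : (0:ℤ) ≤ (D:ℤ) - 2) (sq_nonneg n)]
      subst hn
      have hm2 : (m - 1) * (m + 1) = 0 := by linear_combination heq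
      refine ⟨(m : ℂ), 0, ?_, by simp, ?_⟩
      · rcases mul_eq_zero.mp hm2 with h | h
        · left; have : m = 1 := by linarith
          exact_mod_cast this
        · right; have : m = -1 := by linarith
          exact_mod_cast this
      · rw [phiD_apply]
        simp [Finsupp.prod]
    -- c ≥ 2
    have hc2 : 2 ≤ c := by omega
    set p := c.minFac with hpdef
    have hp : p.Prime := Nat.minFac_prime hc1
    have hpc : p ∣ c := Nat.minFac_dvd c
    obtain ⟨hpm, hpn, hpD, hp2, hleg⟩ := prime_facts D hD hsf hDmod m n c hgcd heq p hp hpc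
    obtain ⟨hx0, hy0, hnorm, hg⟩ := hxy p hp hp2 hleg
    have hnormZ : ((x p : ℤ))^2 + (D:ℤ)*((y p : ℤ))^2 = (p:ℤ)^2 := by exact_mod_cast hnorm
    have hXYg : ¬(((p:ℤ) ∣ (x p : ℤ)) ∧ ((p:ℤ) ∣ (y p : ℤ))) := by
      rintro ⟨h1, h2⟩
      have h1' : p ∣ x p := Int.natCast_dvd_natCast.mp h1
      have h2' : p ∣ y p := Int.natCast_dvd_natCast.mp h2
      have : p ∣ Nat.gcd (Nat.gcd (x p) (y p)) p := Nat.dvd_gcd (Nat.dvd_gcd h1' h2') dvd_rfl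
      rw [hg] at this
      exact hp.one_lt.ne' (Nat.dvd_one.mp this)
    obtain ⟨s, m', n', hs, hgcd', heq', hfact⟩ :=
      descent D m n c p hp hpc hgcd heq hpm hpn hpD hp2 (x p) (y p) hnormZ hXYg
    have hcp : c / p < c := Nat.div_lt_self (by omega) hp.one_lt
    obtain ⟨u, e', hu, hsupp', heq2⟩ := ih (c / p) hcp m' n' hgcd' heq'
    refine ⟨u, e' + Finsupp.single p s, hu, ?_, ?_⟩
    · intro q hq
      have := Finsupp.support_add hq
      rcases Finset.mem_union.mp this with h | h
      · exact hsupp' q h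
      · have : q = p := by
          have := Finsupp.support_single_subset h
          simpa using this
        subst this
        exact ⟨hp, hp2, hleg⟩
    · have hzne : ∀ q ∈ e'.support ∪ (Finsupp.single p s).support, zet D x y q ≠ 0 := by
        intro q hq
        have hgood : GoodP D q := by
          rcases Finset.mem_union.mp hq with h | h
          · exact hsupp' q h
          · have : q = p := by simpa using Finsupp.support_single_subset h
            subst this; exact ⟨hp, hp2, hleg⟩
        obtain ⟨hq', hq2, hqleg⟩ := hgood
        obtain ⟨hx0', _, _, _⟩ := hxy q hq' hq2 hqleg
        exact zet_ne_zero D (by omega) x y q hq'.pos hx0'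
      have hprodadd : (e' + Finsupp.single p s).prod (fun q k => zet D x y q ^ k)
          = e'.prod (fun q k => zet D x y q ^ k) * zet D x y p ^ s := by
        rw [Finsupp.prod_add_index (fun a _ => zpow_zero _)
          (fun a ha b1 b2 => zpow_add₀ (hzne a ha) b1 b2)]
        congr 1
        exact Finsupp.prod_single_index (zpow_zero _)
      have hphifact : phiD D ⟨m, n⟩ = phiD D ⟨m', n'⟩ * phiD D ⟨(x p : ℤ), s * (y p : ℤ)⟩ := by
        rw [← map_mul, ← hfact]
      rw [hphifact, heq2,
        phi_eq_mul_zet_zpow D (by omega) x y p hp.pos hnormZ s hs, hprodadd]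
      have hcc : ((c/p : ℕ) : ℂ) * (p : ℂ) = (c : ℂ) := by
        rw [← Nat.cast_mul, Nat.div_mul_cancel hpc]
      rw [← hcc]
      ring


lemma not_dvd_XY (D : ℕ) (p : ℕ) (hp : p.Prime) (hpD : ¬((p:ℤ) ∣ (D:ℤ))) (X Y : ℤ)
    (hXY : X^2 + (D:ℤ)*Y^2 = (p:ℤ)^2) (hXYg : ¬((p:ℤ) ∣ X ∧ (p:ℤ) ∣ Y)) :
    ¬((p:ℤ) ∣ X) ∧ ¬((p:ℤ) ∣ Y) := by
  have hprime : Prime (p:ℤ) := Nat.prime_iff_prime_int.mp hp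
  constructor
  · intro hX
    have : (p:ℤ) ∣ (D:ℤ)*Y^2 := by
      have h1 : (p:ℤ) ∣ (p:ℤ)^2 := dvd_pow_self _ two_ne_zero
      have h2 : (p:ℤ) ∣ X^2 := dvd_pow hX two_ne_zero
      have h3 : (p:ℤ) ∣ (p:ℤ)^2 - X^2 := dvd_sub h1 h2
      have e : (D:ℤ)*Y^2 = (p:ℤ)^2 - X^2 := by linarith
      rwa [e]
    rcases hprime.dvd_mul.mp this with h | h
    · exact hpD h
    · exact hXYg ⟨hX, hprime.dvd_of_dvd_pow h⟩
  · intro hY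
    have : (p:ℤ) ∣ X^2 := by
      have h1 : (p:ℤ) ∣ (p:ℤ)^2 := dvd_pow_self _ two_ne_zero
      have h2 : (p:ℤ) ∣ (D:ℤ)*Y^2 := Dvd.dvd.mul_left (dvd_pow hY two_ne_zero) _
      have h3 : (p:ℤ) ∣ (p:ℤ)^2 - (D:ℤ)*Y^2 := dvd_sub h1 h2
      have e : X^2 = (p:ℤ)^2 - (D:ℤ)*Y^2 := by linarith
      rwa [e]
    exact hXYg ⟨hprime.dvd_of_dvd_pow this, hY⟩

lemma leg_not_dvd_D (D p : ℕ) (hp : p.Prime) (hleg : @legendreSym p ⟨hp⟩ (-(D:ℤ)) = 1) :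
    ¬((p:ℤ) ∣ (D:ℤ)) := by
  haveI : Fact p.Prime := ⟨hp⟩
  intro hdvd
  have h0 : ((-(D:ℤ) : ℤ) : ZMod p) = 0 := by
    rw [ZMod.intCast_zmod_eq_zero_iff_dvd]
    exact dvd_neg.mpr hdvd
  have := (legendreSym.eq_zero_iff p (-(D:ℤ))).mpr h0
  rw [hleg] at this
  norm_num at this

lemma gcd_cond_not_both (p X Y : ℕ) (hp : p.Prime) (hg : Nat.gcd (Nat.gcd X Y) p = 1) :
    ¬(((p:ℤ) ∣ (X:ℤ)) ∧ ((p:ℤ) ∣ (Y:ℤ))) := by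
  rintro ⟨h1, h2⟩
  have h1' : p ∣ X := Int.natCast_dvd_natCast.mp h1
  have h2' : p ∣ Y := Int.natCast_dvd_natCast.mp h2
  have : p ∣ Nat.gcd (Nat.gcd X Y) p := Nat.dvd_gcd (Nat.dvd_gcd h1' h2') dvd_rfl
  rw [hg] at this
  exact hp.one_lt.ne' (Nat.dvd_one.mp this)

lemma unique_aux (D : ℕ) (hD : 1 < D) (x y : ℕ → ℕ)
    (hxy : ∀ p : ℕ, (hp : p.Prime) → p ≠ 2 → @legendreSym p ⟨hp⟩ (-(D : ℤ)) = 1 →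
        0 < x p ∧ 0 < y p ∧ (x p) ^ 2 + D * (y p) ^ 2 = p ^ 2 ∧
          Nat.gcd (Nat.gcd (x p) (y p)) p = 1)
    (g : ℕ →₀ ℤ) (hgood : ∀ p ∈ g.support, GoodP D p) (v : ℂ) (hv : v = 1 ∨ v = -1)
    (heq : v * g.prod (fun q k => zet D x y q ^ k) = 1) : g = 0 ∧ v = 1 := by
  have hg0 : g = 0 := by
    by_contra hgne
    obtain ⟨p, hpsupp⟩ := Finsupp.support_nonempty_iff.mpr hgne
    obtain ⟨hp, hp2, hleg⟩ := hgood p hpsupp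
    haveI : Fact p.Prime := ⟨hp⟩
    have hgp0 : g p ≠ 0 := Finsupp.mem_support_iff.mp hpsupp
    set s : ℕ → ℤ := fun q => if (0:ℤ) ≤ g q then 1 else -1 with hsdef
    have hs1 : ∀ q, s q = 1 ∨ s q = -1 := fun q => by
      simp only [hsdef]; split_ifs <;> simp
    have hsk : ∀ q, s q * ((g q).natAbs : ℤ) = g q := fun q => by
      simp only [hsdef]; split_ifs <;> omega
    set ξ : ℕ → ℤ√(-(D:ℤ)) := fun q => ⟨(x q : ℤ), s q * (y q : ℤ)⟩ with hxidef
    have hqfacts : ∀ q ∈ g.support, q.Prime ∧ q ≠ 2 ∧ 0 < x q ∧ 0 < y q ∧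
        ((x q : ℤ))^2 + (D:ℤ)*((y q : ℤ))^2 = (q:ℤ)^2 ∧ ¬((q:ℤ) ∣ (x q : ℤ)) ∧
        ¬((q:ℤ) ∣ (y q : ℤ)) := by
      intro q hq
      obtain ⟨hq', hq2, hqleg⟩ := hgood q hq
      obtain ⟨hx0, hy0, hnorm, hgc⟩ := hxy q hq' hq2 hqleg
      have hnormZ : ((x q : ℤ))^2 + (D:ℤ)*((y q : ℤ))^2 = (q:ℤ)^2 := by exact_mod_cast hnorm
      have hnd := not_dvd_XY D q hq' (leg_not_dvd_D D q hq' hqleg) _ _ hnormZ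
        (gcd_cond_not_both q (x q) (y q) hq' hgc)
      exact ⟨hq', hq2, hx0, hy0, hnormZ, hnd.1, hnd.2⟩
    have hper : ∀ q ∈ g.support,
        zet D x y q ^ (g q) = phiD D (ξ q) ^ (g q).natAbs / (q:ℂ)^((g q).natAbs) := by
      intro q hq
      obtain ⟨hq', _, hx0, _, hnormZ, _, _⟩ := hqfacts q hq
      have hphi := phi_eq_mul_zet_zpow D (by omega) x y q hq'.pos hnormZ (s q) (hs1 q)
      have hqne : (q:ℂ) ≠ 0 := by exact_mod_cast hq'.pos.ne'
      have hz : zet D x y q ^ (s q) = phiD D (ξ q) / q := by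
        simp only [hxidef]
        rw [hphi]
        field_simp
      calc zet D x y q ^ (g q) = zet D x y q ^ (s q * ((g q).natAbs : ℤ)) := by rw [hsk]
        _ = (zet D x y q ^ (s q)) ^ (((g q).natAbs : ℤ)) := by rw [zpow_mul]
        _ = (phiD D (ξ q) / q) ^ ((g q).natAbs) := by rw [hz, zpow_natCast]
        _ = phiD D (ξ q) ^ (g q).natAbs / (q:ℂ)^((g q).natAbs) := div_pow _ _ _
    set P : ℤ√(-(D:ℤ)) := ∏ q ∈ g.support, (ξ q) ^ (g q).natAbs with hPdef
    set Cz : ℕ := ∏ q ∈ g.support, q ^ (g q).natAbs with hCzdef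
    have hCzpos : 0 < Cz := by
      rw [hCzdef]
      apply Finset.prod_pos
      intro q hq
      exact pow_pos (hqfacts q hq).1.pos _
    have hprodeq : g.prod (fun q k => zet D x y q ^ k) = phiD D P / (Cz : ℂ) := by
      rw [Finsupp.prod, Finset.prod_congr rfl hper, Finset.prod_div_distrib]
      congr 1
      · rw [hPdef, map_prod]
        exact (Finset.prod_congr rfl (fun q _ => (map_pow _ _ _))).symm
      · rw [hCzdef]; push_cast; rfl
    have hCzC : ((Cz:ℕ):ℂ) ≠ 0 := by exact_mod_cast hCzpos.ne'
    obtain ⟨ε, hε, hPeq⟩ : ∃ ε : ℤ, (ε = 1 ∨ ε = -1) ∧ P = ((ε * Cz : ℤ) : ℤ√(-(D:ℤ))) := by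
      rcases hv with hv1 | hv1
      · refine ⟨1, Or.inl rfl, phiD_injective D (by omega) ?_⟩
        rw [map_intCast]
        push_cast
        rw [hv1, one_mul, hprodeq] at heq
        field_simp at heq
        rw [heq]; ring
      · refine ⟨-1, Or.inr rfl, phiD_injective D (by omega) ?_⟩
        rw [map_intCast]
        push_cast
        rw [hv1, hprodeq] at heq
        field_simp at heq
        rw [← heq]; ring
    have hpD : ¬((p:ℤ) ∣ (D:ℤ)) := leg_not_dvd_D D p hp hleg
    have hDne : ((-(D:ℤ) : ℤ) : ZMod p) ≠ 0 := by
      rw [Ne, ZMod.intCast_zmod_eq_zero_iff_dvd]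
      intro hdvd
      exact hpD (dvd_neg.mp hdvd)
    obtain ⟨r0, hr0⟩ := (legendreSym.eq_one_iff p hDne).mp hleg
    obtain ⟨hpp, _, hxp0, hyp0, hnormp, hpx, hpy⟩ := hqfacts p hpsupp
    have hxpz : ((x p : ℤ) : ZMod p) ≠ 0 := by
      rw [Ne, ZMod.intCast_zmod_eq_zero_iff_dvd]; exact hpx
    have h2z : (2 : ZMod p) ≠ 0 := by
      have h2' : ((2:ℕ) : ZMod p) ≠ 0 := by
        rw [Ne, ZMod.natCast_eq_zero_iff]
        intro hdvd
        exact hp2 ((Nat.prime_dvd_prime_iff_eq hp Nat.prime_two).mp hdvd)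
      simpa using h2'
    obtain ⟨r, hr, hrp⟩ : ∃ r : ZMod p, r * r = ((-(D:ℤ) : ℤ) : ZMod p) ∧
        ((x p : ℤ) : ZMod p) + (((s p * (y p : ℤ)) : ℤ) : ZMod p) * r ≠ 0 := by
      by_cases hcase : ((x p : ℤ) : ZMod p) + (((s p * (y p : ℤ)) : ℤ) : ZMod p) * r0 ≠ 0
      · exact ⟨r0, hr0.symm, hcase⟩
      · push_neg at hcase
        refine ⟨-r0, by rw [neg_mul_neg]; exact hr0.symm, ?_⟩
        intro hzero
        have h2x : (2 : ZMod p) * ((x p : ℤ) : ZMod p) = 0 := by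
          linear_combination hcase + hzero
        rcases mul_eq_zero.mp h2x with h | h
        · exact h2z h
        · exact hxpz h
    set ψ : ℤ√(-(D:ℤ)) →+* ZMod p := Zsqrtd.lift ⟨r, hr⟩ with hψdef
    have hψapply : ∀ z : ℤ√(-(D:ℤ)), ψ z = ((z.re : ℤ) : ZMod p) + ((z.im : ℤ) : ZMod p) * r :=
      fun z => by simp [hψdef]
    have hrr : r * r = -(D : ZMod p) := by rw [hr]; push_cast; ring
    have hfactor_ne : ∀ q ∈ g.support, ψ (ξ q) ≠ 0 := by
      intro q hq
      obtain ⟨hq', _, _, _, hnormq, _, _⟩ := hqfacts q hq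
      rcases eq_or_ne q p with rfl | hqp
      · rw [hψapply]
        exact hrp
      · have hs2' : (((s q : ℤ)) : ZMod p)^2 = 1 := by
          rcases hs1 q with h|h <;> simp [h]
        have hcast : ((x q : ℕ) : ZMod p)^2 + (D : ZMod p) * ((y q : ℕ) : ZMod p)^2
            = ((q:ℕ) : ZMod p)^2 := by
          have := congrArg (fun t : ℤ => (t : ZMod p)) hnormq
          push_cast at this ⊢
          linear_combination this
        have hqz : ((q:ℕ) : ZMod p) ≠ 0 := by
          rw [Ne, ZMod.natCast_eq_zero_iff]
          intro hdvd
          exact hqp ((Nat.prime_dvd_prime_iff_eq hp hq').mp hdvd).symm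
        have hprodq : ψ (ξ q) * (((x q : ℕ) : ZMod p) - (((s q : ℤ)) : ZMod p) * ((y q : ℕ) : ZMod p) * r)
            = ((q:ℕ) : ZMod p)^2 := by
          rw [hψapply]
          simp only [hxidef]
          push_cast
          linear_combination hcast - (((y q : ℕ) : ZMod p)^2*(r*r))*hs2' - (((y q : ℕ) : ZMod p)^2)*hrr
        intro h0
        rw [h0, zero_mul] at hprodq
        exact (pow_ne_zero 2 hqz) hprodq.symm
    have hψP : ψ P ≠ 0 := by
      rw [hPdef, map_prod]
      rw [Finset.prod_ne_zero_iff]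
      intro q hq
      rw [map_pow]
      exact pow_ne_zero _ (hfactor_ne q hq)
    have hψP0 : ψ P = 0 := by
      rw [hPeq, map_intCast]
      have hpCz : (p:ℕ) ∣ Cz := by
        rw [hCzdef]
        exact dvd_trans (dvd_pow_self p (Int.natAbs_ne_zero.mpr hgp0))
          (Finset.dvd_prod_of_mem _ hpsupp)
      have : ((Cz : ℕ) : ZMod p) = 0 := (ZMod.natCast_eq_zero_iff Cz p).mpr hpCz
      push_cast
      rw [this, mul_zero]
    exact hψP hψP0
  refine ⟨hg0, ?_⟩
  rw [hg0] at heq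
  simpa using heq


lemma prod_good_ne_zero (D : ℕ) (hD : 1 < D) (x y : ℕ → ℕ)
    (hxy : ∀ p : ℕ, (hp : p.Prime) → p ≠ 2 → @legendreSym p ⟨hp⟩ (-(D : ℤ)) = 1 →
        0 < x p ∧ 0 < y p ∧ (x p) ^ 2 + D * (y p) ^ 2 = p ^ 2 ∧
          Nat.gcd (Nat.gcd (x p) (y p)) p = 1)
    (e : ℕ →₀ ℤ) (hgood : ∀ q ∈ e.support, GoodP D q) :
    e.prod (fun q k => zet D x y q ^ k) ≠ 0 := by
  rw [Finsupp.prod]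
  rw [Finset.prod_ne_zero_iff]
  intro q hq
  obtain ⟨hq', hq2, hqleg⟩ := hgood q hq
  obtain ⟨hx0, _, _, _⟩ := hxy q hq' hq2 hqleg
  exact zpow_ne_zero _ (zet_ne_zero D (by omega) x y q hq'.pos hx0)

lemma zet_good_ne_zero (D : ℕ) (hD : 1 < D) (x y : ℕ → ℕ)
    (hxy : ∀ p : ℕ, (hp : p.Prime) → p ≠ 2 → @legendreSym p ⟨hp⟩ (-(D : ℤ)) = 1 →
        0 < x p ∧ 0 < y p ∧ (x p) ^ 2 + D * (y p) ^ 2 = p ^ 2 ∧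
          Nat.gcd (Nat.gcd (x p) (y p)) p = 1)
    (q : ℕ) (hq : GoodP D q) : zet D x y q ≠ 0 := by
  obtain ⟨hq', hq2, hqleg⟩ := hq
  obtain ⟨hx0, _, _, _⟩ := hxy q hq' hq2 hqleg
  exact zet_ne_zero D (by omega) x y q hq'.pos hx0

lemma rep_unique (D : ℕ) (hD : 1 < D) (x y : ℕ → ℕ)
    (hxy : ∀ p : ℕ, (hp : p.Prime) → p ≠ 2 → @legendreSym p ⟨hp⟩ (-(D : ℤ)) = 1 →
        0 < x p ∧ 0 < y p ∧ (x p) ^ 2 + D * (y p) ^ 2 = p ^ 2 ∧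
          Nat.gcd (Nat.gcd (x p) (y p)) p = 1)
    (u₁ u₂ : ℂ) (e₁ e₂ : ℕ →₀ ℤ)
    (hu₁ : u₁ = 1 ∨ u₁ = -1) (hu₂ : u₂ = 1 ∨ u₂ = -1)
    (hs₁ : ∀ q ∈ e₁.support, GoodP D q) (hs₂ : ∀ q ∈ e₂.support, GoodP D q)
    (heq : u₁ * e₁.prod (fun q k => zet D x y q ^ k) = u₂ * e₂.prod (fun q k => zet D x y q ^ k)) :
    u₁ = u₂ ∧ e₁ = e₂ := by
  set F : ℕ → ℤ → ℂ := fun q k => zet D x y q ^ k with hF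
  set g : ℕ →₀ ℤ := e₁ - e₂ with hg
  have hgsupp : ∀ q ∈ g.support, GoodP D q := by
    intro q hq
    rcases Finset.mem_union.mp (Finsupp.support_sub hq) with h | h
    · exact hs₁ q h
    · exact hs₂ q h
  have hge : g + e₂ = e₁ := sub_add_cancel e₁ e₂
  have hzne : ∀ q ∈ g.support ∪ e₂.support, zet D x y q ≠ 0 := by
    intro q hq
    rcases Finset.mem_union.mp hq with h | h
    · exact zet_good_ne_zero D hD x y hxy q (hgsupp q h)
    · exact zet_good_ne_zero D hD x y hxy q (hs₂ q h)
  have hsplit : e₁.prod F = g.prod F * e₂.prod F := by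
    rw [← hge]
    exact Finsupp.prod_add_index (fun a _ => zpow_zero _)
      (fun a ha b1 b2 => zpow_add₀ (hzne a ha) b1 b2)
  have hne₂ : e₂.prod F ≠ 0 := prod_good_ne_zero D hD x y hxy e₂ hs₂
  have hkey : u₁ * g.prod F = u₂ := by
    have := heq
    rw [hsplit] at this
    rcases mul_eq_mul_right_iff.mp (by linear_combination this :
        (u₁ * g.prod F) * e₂.prod F = u₂ * e₂.prod F) with h | h
    · exact h
    · exact absurd h hne₂
  have hvg : (u₁ * u₂) * g.prod F = 1 := by
    rcases hu₁ with h1 | h1 <;> rcases hu₂ with h2 | h2 <;>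
      (rw [h1, h2] at hkey ⊢; first | linear_combination hkey | linear_combination -hkey)
  have hv : u₁ * u₂ = 1 ∨ u₁ * u₂ = -1 := by
    rcases hu₁ with h1 | h1 <;> rcases hu₂ with h2 | h2 <;> simp [h1, h2]
  obtain ⟨hg0, hv1⟩ := unique_aux D hD x y hxy g hgsupp (u₁ * u₂) hv hvg
  constructor
  · rcases hu₁ with h1 | h1 <;> rcases hu₂ with h2 | h2 <;>
      rw [h1, h2] at hv1 <;> rw [h1, h2] <;> norm_num at hv1
  · have := hg0
    rw [hg] at this
    exact sub_eq_zero.mp this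


/-- **Group structure theorem of [JMMM]: `G_D(ℚ) = {±1} × F` with `F` free abelian on the
`ζ_p`.**
Let `D > 1` be a squarefree integer with `D ≡ 1` or `2 (mod 4)` such that every element of the
ideal class group of `ℚ(√-D)` (equivalently, of `ℤ[√-D]`) has order dividing 2.  For each odd
prime `p` with Legendre symbol `(-D/p) = 1`, let `(x p, y p)` be the (unique) pair of positive
integers with `(x p)² + D (y p)² = p²` and `gcd(x p, y p, p) = 1`, and put
`ζ_p = (x p + y p · √D · i)/p ∈ ℂ`.  Then every element `a + b √D i` of
`G_D(ℚ) = {a + b √D i : a, b ∈ ℚ, a² + D b² = 1}` has a unique representation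
`u · ∏_p ζ_p ^ (e p)` with `u ∈ {1, -1}` and `e` a finitely supported family of integer
exponents indexed by the odd primes `p` with `(-D/p) = 1`. -/
theorem G_D_decomposition
    (D : ℕ) (hD : 1 < D) (hsf : Squarefree D) (hDmod : D % 4 = 1 ∨ D % 4 = 2)
    [IsDomain (ℤ√(-(D : ℤ)))]
    (hclass : ∀ x : ClassGroup (ℤ√(-(D : ℤ))), x ^ 2 = 1)
    (x y : ℕ → ℕ)
    (hxy : ∀ p : ℕ, (hp : p.Prime) → p ≠ 2 → @legendreSym p ⟨hp⟩ (-(D : ℤ)) = 1 →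
        0 < x p ∧ 0 < y p ∧ (x p) ^ 2 + D * (y p) ^ 2 = p ^ 2 ∧
          Nat.gcd (Nat.gcd (x p) (y p)) p = 1)
    (a b : ℚ) (h : a ^ 2 + (D : ℚ) * b ^ 2 = 1) :
    ∃! ue : ℂ × (ℕ →₀ ℤ),
      (ue.1 = 1 ∨ ue.1 = -1) ∧
      (∀ p ∈ ue.2.support, ∃ hp : p.Prime, p ≠ 2 ∧ @legendreSym p ⟨hp⟩ (-(D : ℤ)) = 1) ∧
      (a : ℂ) + (b : ℂ) * (Real.sqrt D : ℂ) * Complex.I =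
        ue.1 * ∏ p ∈ ue.2.support,
          (((x p : ℂ) + (y p : ℂ) * (Real.sqrt D : ℂ) * Complex.I) / (p : ℂ)) ^ (ue.2 p) := by
  -- the statement's product is `Finsupp.prod` of `zet`
  have hprod_eq : ∀ e : ℕ →₀ ℤ,
      (∏ p ∈ e.support,
        (((x p : ℂ) + (y p : ℂ) * (Real.sqrt D : ℂ) * Complex.I) / (p : ℂ)) ^ (e p))
      = e.prod (fun q k => zet D x y q ^ k) := fun e => rfl
  -- construct integer representation
  have had : ((a.den : ℚ)) ≠ 0 := by exact_mod_cast a.den_nz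
  have hbd : ((b.den : ℚ)) ≠ 0 := by exact_mod_cast b.den_nz
  set m0 : ℤ := a.num * b.den with hm0def
  set n0 : ℤ := b.num * a.den with hn0def
  set c0 : ℤ := (a.den : ℤ) * b.den with hc0def
  have hc0pos : 0 < c0 := by
    apply mul_pos <;> exact_mod_cast Nat.pos_of_ne_zero (by simp [a.den_nz, b.den_nz])
  have hQ : (m0:ℚ)^2 + (D:ℚ)*(n0:ℚ)^2 = (c0:ℚ)^2 := by
    have ha' : (a.num : ℚ) = a * a.den := (div_eq_iff had).mp (Rat.num_div_den a)
    have hb' : (b.num : ℚ) = b * b.den := (div_eq_iff hbd).mp (Rat.num_div_den b)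
    simp only [hm0def, hn0def, hc0def]
    push_cast
    rw [ha', hb']
    linear_combination ((a.den:ℚ)^2 * (b.den:ℚ)^2) * h
  have heq0 : m0^2 + (D:ℤ)*n0^2 = c0^2 := by exact_mod_cast hQ
  set g : ℕ := Int.gcd m0 n0 with hgdef
  have hg0 : g ≠ 0 := by
    intro hgz
    have hm00 : m0 = 0 := Int.natAbs_eq_zero.mp (Nat.eq_zero_of_gcd_eq_zero_left hgz)
    have hn00 : n0 = 0 := Int.natAbs_eq_zero.mp (Nat.eq_zero_of_gcd_eq_zero_right hgz)
    have ha0 : a.num = 0 := by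
      rcases mul_eq_zero.mp hm00 with h' | h'
      · exact h'
      · exact absurd h' (by exact_mod_cast b.den_nz)
    have hb0 : b.num = 0 := by
      rcases mul_eq_zero.mp hn00 with h' | h'
      · exact h'
      · exact absurd h' (by exact_mod_cast a.den_nz)
    have : a = 0 := by exact_mod_cast Rat.zero_iff_num_zero.mpr ha0
    have hb00 : b = 0 := by exact_mod_cast Rat.zero_iff_num_zero.mpr hb0
    rw [this, hb00] at h
    norm_num at h
  have hgm : ((g:ℤ)) ∣ m0 := Int.gcd_dvd_left m0 n0
  have hgn : ((g:ℤ)) ∣ n0 := Int.gcd_dvd_right m0 n0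
  have hgc : ((g:ℤ)) ∣ c0 := by
    have h2 : ((g:ℤ))^2 ∣ c0^2 := by
      rw [← heq0]
      exact dvd_add (pow_dvd_pow_of_dvd hgm 2) ((pow_dvd_pow_of_dvd hgn 2).mul_left _)
    have h3 : g^2 ∣ c0.natAbs^2 := by
      have := Int.natAbs_dvd_natAbs.mpr h2
      simpa [Int.natAbs_pow] using this
    have h4 : g ∣ c0.natAbs := (Nat.pow_dvd_pow_iff two_ne_zero).mp h3
    exact Int.dvd_natAbs.mp (Int.natCast_dvd_natCast.mpr h4)
  obtain ⟨m, hm⟩ := hgm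
  obtain ⟨n, hn⟩ := hgn
  obtain ⟨cz, hcz⟩ := hgc
  have hgzpos : (0:ℤ) < g := by exact_mod_cast Nat.pos_of_ne_zero hg0
  have hczpos : 0 < cz := by
    by_contra hle
    push_neg at hle
    have : c0 ≤ 0 := by
      rw [hcz]
      exact mul_nonpos_of_nonneg_of_nonpos (by positivity) hle
    omega
  set c : ℕ := cz.toNat with hcdef
  have hczc : (c:ℤ) = cz := Int.toNat_of_nonneg hczpos.le
  have hgne : ((g:ℤ)) ≠ 0 := by exact_mod_cast hg0
  have hgcdmn : Int.gcd m n = 1 := by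
    have h5 : Int.gcd ((g:ℤ)*m) ((g:ℤ)*n) = g * Int.gcd m n := by
      rw [Int.gcd_mul_left]
      simp
    rw [← hm, ← hn] at h5
    rw [← hgdef] at h5
    have h6 : g * 1 = g * Int.gcd m n := by simpa using h5
    exact (Nat.eq_of_mul_eq_mul_left (Nat.pos_of_ne_zero hg0) h6).symm
  have heqmn : m^2 + (D:ℤ)*n^2 = (c:ℤ)^2 := by
    have hexp : (g:ℤ)^2 * (m^2 + (D:ℤ)*n^2) = (g:ℤ)^2 * cz^2 := by
      calc (g:ℤ)^2 * (m^2 + (D:ℤ)*n^2) = ((g:ℤ)*m)^2 + (D:ℤ)*((g:ℤ)*n)^2 := by ring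
        _ = c0^2 := by rw [← hm, ← hn]; exact heq0
        _ = (g:ℤ)^2 * cz^2 := by rw [hcz]; ring
    have := mul_left_cancel₀ (pow_ne_zero 2 hgne) hexp
    rw [hczc]
    exact this
  -- z = phiD ⟨m,n⟩ / c
  have hcC : ((c:ℕ):ℂ) ≠ 0 := by
    have : c ≠ 0 := by omega
    exact_mod_cast this
  have hzrep : (a : ℂ) + (b : ℂ) * (Real.sqrt D : ℂ) * Complex.I
      = phiD D ⟨m, n⟩ / (c : ℂ) := by
    rw [phiD_apply]
    have hgQ : ((g:ℚ)) ≠ 0 := by exact_mod_cast hg0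
    have hczQ : ((cz:ℤ):ℚ) = ((c:ℕ):ℚ) := by exact_mod_cast hczc.symm
    have e1 : (c0:ℚ) = (g:ℚ) * ((c:ℕ):ℚ) := by
      rw [hcz]; push_cast; rw [hczQ]
    have haQ : a * ((c:ℕ):ℚ) = (m:ℚ) := by
      have h1 : a * (c0:ℚ) = (m0:ℚ) := by
        have ha' : (a.num : ℚ) = a * a.den := (div_eq_iff had).mp (Rat.num_div_den a)
        simp only [hm0def, hc0def]
        push_cast
        rw [ha']
        ring
      have e2 : (m0:ℚ) = (g:ℚ) * (m:ℚ) := by rw [hm]; push_cast; ring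
      have h4 : (g:ℚ) * (a * ((c:ℕ):ℚ)) = (g:ℚ) * (m:ℚ) := by
        calc (g:ℚ) * (a * ((c:ℕ):ℚ)) = a * (c0:ℚ) := by rw [e1]; ring
          _ = (m0:ℚ) := h1
          _ = (g:ℚ) * (m:ℚ) := e2
      exact mul_left_cancel₀ hgQ h4
    have hbQ : b * ((c:ℕ):ℚ) = (n:ℚ) := by
      have h1 : b * (c0:ℚ) = (n0:ℚ) := by
        have hb' : (b.num : ℚ) = b * b.den := (div_eq_iff hbd).mp (Rat.num_div_den b)
        simp only [hn0def, hc0def]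
        push_cast
        rw [hb']
        ring
      have e2 : (n0:ℚ) = (g:ℚ) * (n:ℚ) := by rw [hn]; push_cast; ring
      have h4 : (g:ℚ) * (b * ((c:ℕ):ℚ)) = (g:ℚ) * (n:ℚ) := by
        calc (g:ℚ) * (b * ((c:ℕ):ℚ)) = b * (c0:ℚ) := by rw [e1]; ring
          _ = (n0:ℚ) := h1
          _ = (g:ℚ) * (n:ℚ) := e2
      exact mul_left_cancel₀ hgQ h4
    have haC : (a:ℂ) * (c:ℂ) = (m:ℂ) := by exact_mod_cast congrArg (fun t : ℚ => (t:ℂ)) haQ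
    have hbC : (b:ℂ) * (c:ℂ) = (n:ℂ) := by exact_mod_cast congrArg (fun t : ℚ => (t:ℂ)) hbQ
    field_simp
    rw [← haC, ← hbC]
    push_cast
    ring
  obtain ⟨u, e, hu, hsupp, hrep⟩ := exists_rep D hD hsf hDmod x y hxy c m n hgcdmn heqmn
  refine ⟨(u, e), ⟨hu, hsupp, ?_⟩, ?_⟩
  · rw [hprod_eq, hzrep, hrep]
    field_simp
  · rintro ⟨u₁, e₁⟩ ⟨hu₁, hsupp₁, heq₁⟩
    have hze : (a : ℂ) + (b : ℂ) * (Real.sqrt D : ℂ) * Complex.I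
        = u * e.prod (fun q k => zet D x y q ^ k) := by
      rw [hzrep, hrep]
      field_simp
    rw [hprod_eq] at heq₁
    have := rep_unique D hD x y hxy u₁ u e₁ e hu₁ hu hsupp₁ hsupp (by rw [← heq₁, ← hze])
    ext
    · exact this.1
    · rw [this.2]
end

section
/- Let D > 1 be a squarefree integer with D ≡ 1 or 2 (mod 4) such that every element of the ideal class group of ℚ(√−D) has order dividing 2. Let p₁, …, p_k be distinct odd primes with Legendre symbol (−D/pᵢ) = 1 and let e₁, …, e_k be integers. If ζ_{p₁}^{e₁} ⋯ ζ_{p_k}^{e_k} ∈ {1, −1}, then e₁ = ⋯ = e_k = 0 (and the product equals 1); in particular the elements ζ_{p₁}, …, ζ_{p_k} are multiplicatively independent in ℂ. -/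
open Complex

section ZetaAux


lemma norm_eq_one_of_mul (q : ℕ) [Fact q.Prime] {d : ℤ} (ψ : ℤ√d →+* ℚ_[q])
    (hle : ∀ z : ℤ√d, ‖ψ z‖ ≤ 1) (z : ℤ√d) (m : ℤ)
    (hz : z * star z = ((m : ℤ√d))) (hm : ¬ (q:ℤ) ∣ m) :
    ‖ψ z‖ = 1 ∧ ‖ψ (star z)‖ = 1 := by
  have h2 : ‖((m : ℚ_[q]))‖ = 1 :=
    le_antisymm (Padic.norm_int_le_one m)
      (not_lt.mp fun hc => hm (Padic.norm_intCast_lt_one_iff.mp hc))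
  have hmul : ‖ψ z‖ * ‖ψ (star z)‖ = 1 := by
    rw [← norm_mul, ← map_mul, hz, map_intCast]
    exact h2
  constructor <;>
    nlinarith [hle z, hle (star z), norm_nonneg (ψ z), norm_nonneg (ψ (star z))]

lemma norm_split (q : ℕ) [hq : Fact q.Prime] {d : ℤ} (ψ : ℤ√d →+* ℚ_[q])
    (hle : ∀ z : ℤ√d, ‖ψ z‖ ≤ 1) (z : ℤ√d) (w : ℤ)
    (hz : z * star z = ((((q:ℤ)^2 : ℤ) : ℤ√d))) (hsum : z + star z = ((w : ℤ√d)))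
    (hw : ¬ (q:ℤ) ∣ w) :
    (‖ψ z‖ = 1 ∧ ‖ψ (star z)‖ = ((q:ℝ)⁻¹)^2) ∨
      (‖ψ (star z)‖ = 1 ∧ ‖ψ z‖ = ((q:ℝ)⁻¹)^2) := by
  have hmul : ‖ψ z‖ * ‖ψ (star z)‖ = ((q:ℝ)⁻¹)^2 := by
    rw [← norm_mul, ← map_mul, hz, map_intCast]
    push_cast
    rw [norm_pow, Padic.norm_p]
  have hone : ‖ψ z‖ = 1 ∨ ‖ψ (star z)‖ = 1 := by
    by_contra hc
    push_neg at hc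
    have l1 : ‖ψ z‖ < 1 := lt_of_le_of_ne (hle z) hc.1
    have l2 : ‖ψ (star z)‖ < 1 := lt_of_le_of_ne (hle _) hc.2
    have l3 : ‖ψ z + ψ (star z)‖ < 1 :=
      lt_of_le_of_lt (Padic.nonarchimedean _ _) (max_lt l1 l2)
    rw [← map_add, hsum, map_intCast, Padic.norm_intCast_lt_one_iff] at l3
    exact hw l3
  rcases hone with h | h
  · left
    refine ⟨h, ?_⟩
    rw [h, one_mul] at hmul
    exact hmul
  · right
    refine ⟨h, ?_⟩
    rw [h, mul_one] at hmul
    exact hmul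

lemma exists_padic_sqrt (p : ℕ) [hfp : Fact p.Prime] (hodd : p ≠ 2) (d : ℤ)
    (hleg : legendreSym p d = 1) : ∃ t : ℤ_[p], t * t = (d : ℤ_[p]) := by
  have hd0 : (d : ZMod p) ≠ 0 := by
    intro h0
    rw [(legendreSym.eq_zero_iff p d).mpr h0] at hleg
    exact zero_ne_one hleg
  obtain ⟨s, hs⟩ := (legendreSym.eq_one_iff p hd0).mp hleg
  have hs0 : s ≠ 0 := by
    rintro rfl
    rw [mul_zero] at hs
    exact hd0 hs
  set a : ℤ_[p] := ((s.val : ℤ) : ℤ_[p]) with ha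
  set F : Polynomial ℤ_[p] := Polynomial.X ^ 2 - Polynomial.C ((d : ℤ_[p])) with hF
  have hFa : F.eval a = ((s.val * s.val - d : ℤ) : ℤ_[p]) := by
    simp only [hF, Polynomial.eval_sub, Polynomial.eval_pow, Polynomial.eval_X,
      Polynomial.eval_C, ha]
    push_cast
    ring
  have hF'a : F.derivative.eval a = ((2 * s.val : ℤ) : ℤ_[p]) := by
    simp only [hF, Polynomial.derivative_sub, Polynomial.derivative_C,
      Polynomial.derivative_X_pow, Polynomial.eval_sub, Polynomial.eval_zero,
      Polynomial.eval_mul, Polynomial.eval_pow, Polynomial.eval_natCast, Polynomial.eval_C,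
      Polynomial.eval_X, sub_zero, ha]
    push_cast
    ring
  have hdvd : (p : ℤ) ∣ (s.val * s.val - d : ℤ) := by
    rw [← ZMod.intCast_zmod_eq_zero_iff_dvd]
    push_cast
    rw [ZMod.natCast_val, ZMod.cast_id, ← hs]
    ring
  have hndvd : ¬ (p : ℤ) ∣ (2 * s.val : ℤ) := by
    intro hdd
    rcases (Int.Prime.dvd_mul' (by exact_mod_cast hfp.out) hdd) with h2 | hsv
    · have h2' : p ∣ 2 := by exact_mod_cast h2
      exact hodd ((Nat.prime_dvd_prime_iff_eq hfp.out Nat.prime_two).mp h2')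
    · have hsv' : p ∣ s.val := by exact_mod_cast hsv
      have : (s.val : ZMod p) = 0 := (ZMod.natCast_eq_zero_iff _ _).mpr hsv'
      rw [ZMod.natCast_val, ZMod.cast_id] at this
      exact hs0 this
  have h1 : ‖F.derivative.eval a‖ = 1 := by
    rw [hF'a]
    refine le_antisymm (PadicInt.norm_le_one _) ?_
    rw [← not_lt, PadicInt.norm_int_lt_one_iff_dvd]
    exact hndvd
  have hnorm : ‖F.eval a‖ < ‖F.derivative.eval a‖ ^ 2 := by
    rw [h1, one_pow, hFa, PadicInt.norm_int_lt_one_iff_dvd]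
    exact hdvd
  obtain ⟨z, hz, -⟩ := hensels_lemma hnorm
  refine ⟨z, ?_⟩
  have h2 : z ^ 2 - (d : ℤ_[p]) = 0 := by simpa [hF] using hz
  rw [← pow_two]
  exact sub_eq_zero.mp h2

lemma padic_step (q : ℕ) [hq : Fact q.Prime] {d : ℤ} {k : ℕ}
    (γ : Fin k → ℤ√d) (n : Fin k → ℕ) (P : Fin k → ℕ) (u : ℤ√d)
    (hu : u = 1 ∨ u = -1) (i : Fin k)
    (ψ : ℤ√d →+* ℚ_[q])
    (E : ∏ j, γ j ^ n j = u * ∏ j, ((P j : ℤ) : ℤ√d) ^ n j)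
    (hPj : ∀ j, j ≠ i → ¬ (q:ℤ) ∣ ((P j : ℤ)))
    (hPi : P i = q)
    (h1 : ∀ j, j ≠ i → ‖ψ (γ j)‖ = 1)
    (hi : ‖ψ (γ i)‖ = ((q:ℝ)⁻¹)^2) : n i = 0 := by
  have hnE := congrArg (fun z : ℤ√d => ‖ψ z‖) E
  simp only [map_prod, map_mul, map_pow, map_intCast] at hnE
  rw [norm_mul] at hnE
  rw [norm_prod, norm_prod] at hnE
  simp only [norm_pow] at hnE
  rw [Finset.prod_eq_single_of_mem i (Finset.mem_univ i)
      (fun j _ hj => by rw [h1 j hj, one_pow]),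
    Finset.prod_eq_single_of_mem i (Finset.mem_univ i)
      (fun j _ hj => by
        rw [le_antisymm (Padic.norm_int_le_one _)
          (not_lt.mp fun hc => (hPj j hj) (Padic.norm_intCast_lt_one_iff.mp hc)),
          one_pow])] at hnE
  have hu1 : ‖ψ u‖ = 1 := by rcases hu with rfl | rfl <;> simp
  have hqcast : ‖(((P i : ℤ)) : ℚ_[q])‖ = (q:ℝ)⁻¹ := by
    rw [hPi]
    push_cast
    exact Padic.norm_p
  rw [hu1, one_mul, hi, hqcast, ← pow_mul] at hnE
  by_contra hn
  have hq1 : (1:ℝ) < (q:ℝ) := by exact_mod_cast hq.out.one_lt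
  have h0 : (0:ℝ) < (q:ℝ)⁻¹ := by positivity
  have hlt1 : (q:ℝ)⁻¹ < 1 := by
    rw [inv_lt_one_iff₀]
    right; exact hq1
  have : (q:ℝ)⁻¹ ^ (2 * n i) < (q:ℝ)⁻¹ ^ (n i) :=
    pow_lt_pow_right_of_lt_one₀ h0 hlt1 (by omega)
  rw [hnE] at this
  exact lt_irrefl _ this

end ZetaAux

/-- **Multiplicative independence of the `ζ_p` ([JMMM]).**
Let `D > 1` be a squarefree integer with `D ≡ 1` or `2 (mod 4)` such that every element of the
ideal class group of `ℚ(√-D)` (equivalently, of `ℤ[√-D]`) has order dividing 2.  Let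
`p 0, …, p (k-1)` be distinct odd primes with Legendre symbol `(-D / p i) = 1`, with
`ζ_{p i} = (x i + y i · √D · i)/(p i)` built from the unique positive solution
`(x i)² + D (y i)² = (p i)²`, `gcd(x i, y i, p i) = 1`.  If, for integers `e i`,
`∏ i, ζ_{p i} ^ (e i) ∈ {1, -1}`, then all `e i = 0` (and hence the product equals `1`);
in particular the `ζ_{p i}` are multiplicatively independent in `ℂ`. -/
theorem zeta_multiplicatively_independent
    (D : ℕ) (hD : 1 < D) (hsf : Squarefree D) (hDmod : D % 4 = 1 ∨ D % 4 = 2)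
    [IsDomain (ℤ√(-(D : ℤ)))]
    (hclass : ∀ x : ClassGroup (ℤ√(-(D : ℤ))), x ^ 2 = 1)
    (k : ℕ) (p : Fin k → ℕ) (hp : ∀ i, (p i).Prime) (hpodd : ∀ i, p i ≠ 2)
    (hpdist : Function.Injective p)
    (hleg : ∀ i, @legendreSym (p i) ⟨hp i⟩ (-(D : ℤ)) = 1)
    (x y : Fin k → ℕ)
    (hxy : ∀ i, 0 < x i ∧ 0 < y i ∧ (x i) ^ 2 + D * (y i) ^ 2 = (p i) ^ 2 ∧
        Nat.gcd (Nat.gcd (x i) (y i)) (p i) = 1)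
    (e : Fin k → ℤ)
    (h : ∏ i, (((x i : ℂ) + (y i : ℂ) * (Real.sqrt D : ℂ) * Complex.I) / (p i : ℂ)) ^ (e i) = 1
       ∨ ∏ i, (((x i : ℂ) + (y i : ℂ) * (Real.sqrt D : ℂ) * Complex.I) / (p i : ℂ)) ^ (e i)
           = -1) :
    (∀ i, e i = 0) ∧
      ∏ i, (((x i : ℂ) + (y i : ℂ) * (Real.sqrt D : ℂ) * Complex.I) / (p i : ℂ)) ^ (e i) = 1 := by
  classical
  -- it suffices to show all exponents vanish
  suffices he : ∀ i, e i = 0 by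
    refine ⟨he, ?_⟩
    simp [he]
  -- basic facts about the primes
  have hpD : ∀ i, ¬ p i ∣ D := by
    intro i hdvd
    haveI : Fact (p i).Prime := ⟨hp i⟩
    have h0 : ((-(D:ℤ) : ℤ) : ZMod (p i)) = 0 := by
      exact (ZMod.intCast_zmod_eq_zero_iff_dvd _ (p i)).mpr ((dvd_neg).mpr (by exact_mod_cast hdvd))
    have := (legendreSym.eq_zero_iff (p i) (-(D:ℤ))).mpr h0
    rw [hleg i] at this
    exact (by omega : (1:ℤ) ≠ 0) this
  have hpx : ∀ i, ¬ p i ∣ x i := by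
    intro i hdvd
    obtain ⟨hx0, hy0, hN, hg⟩ := hxy i
    have hx2 : p i ∣ (x i)^2 := Dvd.dvd.pow hdvd two_ne_zero
    have hp2 : p i ∣ (p i)^2 := dvd_pow_self _ two_ne_zero
    have hx2le : (x i)^2 ≤ (p i)^2 := by omega
    have hDy : p i ∣ D * (y i)^2 := by
      have : D * (y i)^2 = (p i)^2 - (x i)^2 := by omega
      rw [this]
      exact Nat.dvd_sub hp2 hx2
    rcases (Nat.Prime.dvd_mul (hp i)).mp hDy with hD' | hy2
    · exact hpD i hD'
    · have hy' : p i ∣ y i := (hp i).dvd_of_dvd_pow hy2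
      have : p i ∣ Nat.gcd (Nat.gcd (x i) (y i)) (p i) :=
        Nat.dvd_gcd (Nat.dvd_gcd hdvd hy') dvd_rfl
      rw [hg] at this
      have := Nat.le_of_dvd one_pos this
      have := (hp i).two_le
      omega
  -- complex embedding
  have hrD : (0:ℝ) ≤ (D:ℝ) := by positivity
  have hsq : (Real.sqrt D : ℂ) * (Real.sqrt D : ℂ) = (D : ℂ) := by
    rw [← Complex.ofReal_mul, Real.mul_self_sqrt hrD, Complex.ofReal_natCast]
  have hroot : ((Real.sqrt D : ℂ) * Complex.I) * ((Real.sqrt D : ℂ) * Complex.I)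
      = ((-(D:ℤ) : ℤ) : ℂ) := by
    rw [mul_mul_mul_comm, Complex.I_mul_I, hsq]
    push_cast
    ring
  set φ : ℤ√(-(D:ℤ)) →+* ℂ := Zsqrtd.lift ⟨(Real.sqrt D : ℂ) * Complex.I, hroot⟩ with hφdef
  have hφinj : Function.Injective φ := by
    apply Zsqrtd.lift_injective
    intro m hm
    have hD' : (1:ℤ) < (D:ℤ) := by exact_mod_cast hD
    nlinarith [mul_self_nonneg m]
  set α : Fin k → ℤ√(-(D:ℤ)) := fun i => ⟨(x i : ℤ), (y i : ℤ)⟩ with hα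
  set n : Fin k → ℕ := fun i => (e i).natAbs with hn
  set c : Fin k → ℂ := fun i =>
    ((x i : ℂ) + (y i : ℂ) * (Real.sqrt D : ℂ) * Complex.I) / (p i : ℂ) with hcdef
  have hp0 : ∀ i, (p i : ℂ) ≠ 0 := fun i => by exact_mod_cast (hp i).pos.ne'
  have hNα : ∀ i, α i * star (α i) = (((p i : ℤ)^2 : ℤ) : ℤ√(-(D:ℤ))) := by
    intro i
    have hN' : ((x i:ℤ))^2 + (D:ℤ) * ((y i:ℤ))^2 = ((p i:ℤ))^2 := by
      exact_mod_cast (hxy i).2.2.1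
    have hnorm : (α i).norm = ((p i : ℤ))^2 := by
      rw [Zsqrtd.norm_def, hα]
      ring_nf
      ring_nf at hN'
      linarith [hN']
    rw [← Zsqrtd.norm_eq_mul_conj, hnorm]
  have hφα : ∀ i, φ (α i) = c i * (p i : ℂ) := by
    intro i
    rw [hφdef, hα, hcdef]
    simp only [Zsqrtd.lift_apply_apply]
    rw [div_mul_cancel₀ _ (hp0 i)]
    push_cast
    ring
  have hφmul : ∀ i, φ (α i) * φ (star (α i)) = (p i : ℂ)^2 := by
    intro i
    rw [← map_mul, hNα i, map_intCast]
    push_cast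
    ring
  have hφst : ∀ i, c i * φ (star (α i)) = (p i : ℂ) := by
    intro i
    have h2 := hφmul i
    rw [hφα i] at h2
    apply mul_left_cancel₀ (hp0 i)
    linear_combination h2
  have hc0 : ∀ i, c i ≠ 0 := by
    intro i
    have : c i * φ (star (α i)) ≠ 0 := by rw [hφst i]; exact hp0 i
    exact left_ne_zero_of_mul this
  set β : Fin k → ℤ√(-(D:ℤ)) := fun i => if 0 ≤ e i then α i else star (α i) with hβ
  have hterm : ∀ i, φ (β i) ^ (n i) = c i ^ (e i) * (p i : ℂ) ^ (n i) := by
    intro i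
    by_cases h0 : 0 ≤ e i
    · simp only [hβ, if_pos h0]
      have he' : e i = (n i : ℤ) := by simp only [hn]; omega
      rw [he', zpow_natCast, hφα i, mul_pow]
    · simp only [hβ, if_neg h0]
      have hst : φ (star (α i)) = (p i : ℂ) * (c i)⁻¹ := by
        rw [eq_mul_inv_iff_mul_eq₀ (hc0 i), ← hφst i]
        ring
      rw [hst, mul_pow]
      have hz : c i ^ e i = ((c i) ^ (n i))⁻¹ := by
        rw [show e i = -((n i : ℕ) : ℤ) by simp only [hn]; omega, zpow_neg, zpow_natCast]
      rw [hz, inv_pow]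
      ring
  have hφprod : ∏ i, φ (β i) ^ n i
      = (∏ i, c i ^ e i) * ∏ i, (p i : ℂ) ^ n i := by
    rw [← Finset.prod_mul_distrib]
    exact Finset.prod_congr rfl fun i _ => hterm i
  have hchange : ∏ i, (((x i : ℂ) + (y i : ℂ) * (Real.sqrt D : ℂ) * Complex.I) / (p i : ℂ)) ^ (e i)
      = ∏ i, c i ^ e i := by
    simp only [hcdef]
  obtain ⟨u, hu, hcu⟩ : ∃ u : ℤ√(-(D:ℤ)), (u = 1 ∨ u = -1) ∧ ∏ i, c i ^ e i = φ u := by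
    rcases h with h | h
    · exact ⟨1, Or.inl rfl, by rw [map_one, ← hchange]; exact h⟩
    · exact ⟨-1, Or.inr rfl, by rw [map_neg, map_one, ← hchange]; exact h⟩
  have E : ∏ i, β i ^ n i = u * ∏ i, ((p i : ℤ) : ℤ√(-(D:ℤ))) ^ n i := by
    apply hφinj
    simp only [map_prod, map_pow, map_mul, map_intCast, map_natCast, Int.cast_natCast]
    rw [hφprod, hcu]
  have E' : ∏ i, (star (β i)) ^ n i = u * ∏ i, ((p i : ℤ) : ℤ√(-(D:ℤ))) ^ n i := by
    have hsE := congrArg star E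
    simp only [star_prod, star_pow, star_mul', star_intCast] at hsE
    rwa [show star u = u by rcases hu with rfl | rfl <;> simp] at hsE
  -- now fix i and work p i-adically
  intro i
  haveI : Fact (p i).Prime := ⟨hp i⟩
  obtain ⟨t, ht⟩ := exists_padic_sqrt (p i) (hpodd i) (-(D:ℤ)) (hleg i)
  set ψ : ℤ√(-(D:ℤ)) →+* ℚ_[p i] :=
    (PadicInt.Coe.ringHom).comp (Zsqrtd.lift ⟨t, ht⟩) with hψdef
  have hle : ∀ z, ‖ψ z‖ ≤ 1 := by
    intro z
    have hzz : ψ z = (((Zsqrtd.lift ⟨t, ht⟩ z : ℤ_[p i]) : ℚ_[p i])) := rfl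
    rw [hzz, PadicInt.padic_norm_e_of_padicInt]
    exact PadicInt.norm_le_one _
  have hPdvd : ∀ j, j ≠ i → ¬ ((p i:ℤ) ∣ (p j : ℤ)) := by
    intro j hj hdd
    have h2 : p i ∣ p j := by exact_mod_cast hdd
    exact hj (hpdist ((Nat.prime_dvd_prime_iff_eq (hp i) (hp j)).mp h2)).symm
  have hcop : ∀ j, j ≠ i → ¬ ((p i : ℤ) ∣ ((p j : ℤ))^2) := by
    intro j hj hdd
    have h1 : p i ∣ (p j)^2 := by exact_mod_cast hdd
    exact hPdvd j hj (by exact_mod_cast (hp i).dvd_of_dvd_pow h1)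
  have hNβ : ∀ j, β j * star (β j) = (((p j : ℤ)^2 : ℤ) : ℤ√(-(D:ℤ))) := by
    intro j
    by_cases h0 : 0 ≤ e j
    · simp only [hβ, if_pos h0]
      exact hNα j
    · simp only [hβ, if_neg h0, star_star]
      rw [mul_comm]
      exact hNα j
  have hunit : ∀ j, j ≠ i → ‖ψ (β j)‖ = 1 ∧ ‖ψ (star (β j))‖ = 1 := fun j hj =>
    norm_eq_one_of_mul (p i) ψ hle (β j) _ (hNβ j) (hcop j hj)
  have hadd : α i + star (α i) = (((2 * (x i : ℤ)) : ℤ) : ℤ√(-(D:ℤ))) := by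
    rw [hα]
    ext <;> simp [Zsqrtd.re_star, Zsqrtd.im_star] <;> ring
  have hsum : β i + star (β i) = (((2 * (x i : ℤ)) : ℤ) : ℤ√(-(D:ℤ))) := by
    by_cases h0 : 0 ≤ e i
    · simpa only [hβ, if_pos h0] using hadd
    · simp only [hβ, if_neg h0, star_star]
      rw [add_comm]
      exact hadd
  have h2x : ¬ ((p i : ℤ)) ∣ (2 * (x i : ℤ)) := by
    intro hdd
    have hdd' : p i ∣ 2 * x i := by exact_mod_cast hdd
    rcases (Nat.Prime.dvd_mul (hp i)).mp hdd' with h2 | hx'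
    · exact hpodd i ((Nat.prime_dvd_prime_iff_eq (hp i) Nat.prime_two).mp h2)
    · exact hpx i hx'
  have hni : n i = 0 := by
    rcases norm_split (p i) ψ hle (β i) (2 * (x i:ℤ)) (by exact_mod_cast hNβ i) hsum h2x with
      ⟨h1i, h2i⟩ | ⟨h1i, h2i⟩
    · exact padic_step (p i) (fun j => star (β j)) n p u hu i ψ E' hPdvd rfl
        (fun j hj => (hunit j hj).2) h2i
    · exact padic_step (p i) β n p u hu i ψ E hPdvd rfl
        (fun j hj => (hunit j hj).1) h2i
  simp only [hn] at hni
  omega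
end
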